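/- arXiv:1911.09563 — 2 statements merged into one kernel-verified Lean document; each statement's English description precedes it below -/
import Mathlib

section
/- Let (β_t^x)_{t≥0} be the aperiodic nearest-neighbors branching random walk on ℤ^d started by a single particle at x, with offspring distribution 𝒫. For every n ≥ 1 and all x, y in the intersection of the positive orthant ℤ₊^d with the interior Λ̊_n^d, if x ⪯ y then τ_n^y ≤_st τ_n^x, i.e. ℙ(τ_n^y > t) ≤ ℙ(τ_n^x > t) for every t. -/
open scoped ENNReal
open MeasureTheory Filter

namespace BRW

/-- Sites of the lattice `ℤ^d`. -/
abbrev Site (d : ℕ) := Fin d → ℤ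

/-- A configuration of particles: finitely many particles, `η z` particles at site `z`. -/
abbrev Config (d : ℕ) := Site d →₀ ℕ

noncomputable instance (d : ℕ) : MeasurableSpace (Config d) := ⊤
noncomputable instance (d : ℕ) : MeasurableSpace (List (Config d)) := ⊤

instance (d : ℕ) : Inhabited (Config d) := ⟨0⟩

/-- Uniform distribution on a finite set (junk value if the set is empty). -/
noncomputable def unifOn {α : Type*} [Inhabited α] (s : Finset α) : PMF α :=
  if h : s.Nonempty then PMF.uniformOfFinset s h else PMF.pure default

/-- Bernoulli distribution (junk value if `p > 1`). -/
noncomputable def bern (p : ℝ≥0∞) : PMF Bool :=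
  if h : p ≤ 1 then PMF.bernoulli p.toNNReal (by simpa using ENNReal.toNNReal_mono ENNReal.one_ne_top h) else PMF.pure true

/-- Convolution of two `PMF`s on an additive monoid: the law of a sum of independent samples. -/
noncomputable def conv {α : Type*} [AddCommMonoid α] (p q : PMF α) : PMF α :=
  p.bind fun a => q.bind fun b => PMF.pure (a + b)

instance {α : Type*} [AddCommMonoid α] : Std.Commutative (conv (α := α)) where
  comm p q := by
    unfold conv
    rw [PMF.bind_comm]
    refine congrArg _ (funext fun b => congrArg _ (funext fun a => ?_))
    rw [add_comm]

instance {α : Type*} [AddCommMonoid α] : Std.Associative (conv (α := α)) where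
  assoc p q r := by
    simp only [conv, PMF.bind_bind, PMF.pure_bind, add_assoc]

/-- `n`-fold convolution: the law of a sum of `n` independent samples of `p`. -/
noncomputable def iterConv {α : Type*} [AddCommMonoid α] (p : PMF α) : ℕ → PMF α
  | 0 => PMF.pure 0
  | n + 1 => conv p (iterConv p n)

variable {d : ℕ}

/-- The nearest neighbors (`L¹`-distance exactly one) of a site. -/
def nbrs (z : Site d) : Finset (Site d) :=
  (Finset.univ ×ˢ ({1, -1} : Finset ℤ)).image fun p => Function.update z p.1 (z p.1 + p.2)

/-- Law of the configuration of children of one particle at `z`: a random number of offspring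
distributed according to `P`, each placed independently and uniformly at random on `nbr z`. -/
noncomputable def childLaw (P : PMF ℕ) (nbr : Site d → Finset (Site d)) (z : Site d) :
    PMF (Config d) :=
  P.bind fun n => iterConv ((unifOn (nbr z)).map fun w => Finsupp.single w 1) n

/-- Children law of the aperiodic walk: offspring are placed uniformly on the `2d+1` sites at
`L¹`-distance at most `1` from the parent. -/
noncomputable def aperiodicChild (P : PMF ℕ) (z : Site d) : PMF (Config d) :=
  childLaw P (fun w => insert w (nbrs w)) z

/-- Children law of the periodic walk: offspring are placed uniformly on the `2d` nearest
neighbors of the parent. -/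
noncomputable def periodicChild (P : PMF ℕ) (z : Site d) : PMF (Config d) :=
  childLaw P nbrs z

/-- Children law of the `π`-survival periodic walk: offspring placed uniformly on the nearest
neighbors, and in addition the particle itself survives with probability `π`, independently. -/
noncomputable def survChild (P : PMF ℕ) (π : ℝ≥0∞) (z : Site d) : PMF (Config d) :=
  conv (periodicChild P z) ((bern π).map fun b => if b then Finsupp.single z 1 else 0)

/-- One-step transition of a branching random walk with given children law: every particle
produces, independently of all other particles, a random children configuration. -/
noncomputable def stepOf (child : Site d → PMF (Config d)) (η : Config d) : PMF (Config d) :=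
  Finset.fold conv (PMF.pure 0) (fun z => iterConv (child z) (η z)) η.support

/-- One-step transition of the aperiodic nearest-neighbors branching random walk. -/
noncomputable def aperiodicStep (P : PMF ℕ) : Config d → PMF (Config d) :=
  stepOf (aperiodicChild P)

/-- One-step transition of the periodic nearest-neighbors branching random walk. -/
noncomputable def periodicStep (P : PMF ℕ) : Config d → PMF (Config d) :=
  stepOf (periodicChild P)

/-- One-step transition of the `π`-survival periodic nearest-neighbors branching random walk. -/
noncomputable def survStep (P : PMF ℕ) (π : ℝ≥0∞) : Config d → PMF (Config d) :=
  stepOf (survChild P π)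

/-- The law of the configuration at time `t` of the Markov chain with one-step transition `step`
started from configuration `init`. -/
noncomputable def timeLaw (step : Config d → PMF (Config d)) (init : Config d) :
    ℕ → PMF (Config d)
  | 0 => PMF.pure init
  | t + 1 => (timeLaw step init t).bind step

/-- The law of the trajectory up to time `t`, recorded as the list `[η_t, η_{t-1}, ..., η_0]`. -/
noncomputable def pathLaw (step : Config d → PMF (Config d)) (init : Config d) :
    ℕ → PMF (List (Config d))
  | 0 => PMF.pure [init]
  | t + 1 => (pathLaw step init t).bind fun l => (step l.headI).map fun c => c :: l

/-- `z ∈ ∂Λ_n`, the boundary of the hypercube `Λ_n = {z : ‖z‖_∞ ≤ n}`. -/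
def onBdry (n : ℕ) (z : Site d) : Prop :=
  (∀ i, |z i| ≤ (n : ℤ)) ∧ ∃ i, |z i| = (n : ℤ)

/-- `z ∈ Λ̊_n`, the interior of the hypercube `Λ_n`. -/
def inInterior (n : ℕ) (z : Site d) : Prop :=
  ∀ i, |z i| < (n : ℤ)

/-- The configuration `η` has no particle on `∂Λ_n`. -/
def avoids (n : ℕ) (η : Config d) : Prop :=
  ∀ z : Site d, onBdry n z → η z = 0

/-- `ℙ(τ_n > t)`: the probability that the branching random walk with one-step transition `step`
started from `init` puts no particle on `∂Λ_n` at any time `0, 1, ..., t`. -/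
noncomputable def survProb (step : Config d → PMF (Config d)) (init : Config d) (n t : ℕ) :
    ℝ≥0∞ :=
  (pathLaw step init t).toMeasure {l | ∀ c ∈ l, avoids n c}

/-- `p_n = ℙ(τ_n < ∞)`: the probability that some particle ever reaches `∂Λ_n`. -/
noncomputable def hitProb (step : Config d → PMF (Config d)) (init : Config d) (n : ℕ) : ℝ≥0∞ :=
  1 - ⨅ t : ℕ, survProb step init n t

/-- `ℙ(X(z) > k)` when the configuration `X` is distributed according to `p`. -/
noncomputable def tailProb (p : PMF (Config d)) (z : Site d) (k : ℕ) : ℝ≥0∞ :=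
  p.toMeasure {η | k < η z}

/-- The hitting time of `∂Λ_n` by a trajectory of configurations, valued in `ℕ ∪ {∞}`. -/
noncomputable def hitTime (n : ℕ) (f : ℕ → Config d) : ℕ∞ :=
  sInf ((fun t : ℕ => (t : ℕ∞)) '' {t | ¬ avoids n (f t)})

/-- The process `X` on the probability space `(Ω, Pr)` is a realization of (i.e., has the law of)
the branching random walk with one-step transition `step` started from `init`: for every `t`, the
trajectory up to time `t` has law `pathLaw step init t`. -/
def HasPathLaw {Ω : Type*} [MeasurableSpace Ω] (Pr : Measure Ω)
    (step : Config d → PMF (Config d)) (init : Config d) (X : ℕ → Ω → Config d) : Prop :=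
  ∀ t : ℕ, Measure.map (fun ω => (List.range (t + 1)).map fun s => X (t - s) ω) Pr
    = (pathLaw step init t).toMeasure

end BRW

namespace BRW

/-! ### Auxiliary machinery for the proof -/

section Aux

open scoped Classical in
/-- Indicator of a proposition. -/
noncomputable def ind (p : Prop) : ℝ≥0∞ := if p then 1 else 0

lemma ind_true {p : Prop} (h : p) : ind p = 1 := if_pos h
lemma ind_false {p : Prop} (h : ¬ p) : ind p = 0 := if_neg h
lemma ind_le_one (p : Prop) : ind p ≤ 1 := by
  unfold ind; split <;> simp
lemma ind_and (p q : Prop) : ind (p ∧ q) = ind p * ind q := by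
  unfold ind
  by_cases hp : p <;> by_cases hq : q <;> simp [hp, hq]
lemma ind_congr {p q : Prop} (h : p ↔ q) : ind p = ind q := by
  unfold ind
  by_cases hp : p
  · rw [if_pos hp, if_pos (h.mp hp)]
  · rw [if_neg hp, if_neg (fun hq => hp (h.mpr hq))]

/-- Expectation of `f` under a `PMF`. -/
noncomputable def ex {α : Type*} (p : PMF α) (f : α → ℝ≥0∞) : ℝ≥0∞ := ∑' a, p a * f a

lemma ex_pure {α : Type*} (a : α) (f : α → ℝ≥0∞) : ex (PMF.pure a) f = f a := by
  unfold ex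
  rw [tsum_eq_single a]
  · simp
  · intro b hb; simp [PMF.pure_apply, hb]

lemma ex_bind {α β : Type*} (p : PMF α) (q : α → PMF β) (f : β → ℝ≥0∞) :
    ex (p.bind q) f = ex p (fun a => ex (q a) f) := by
  unfold ex
  simp only [PMF.bind_apply]
  calc ∑' b, (∑' a, p a * q a b) * f b
      = ∑' b, ∑' a, p a * q a b * f b := by
        refine tsum_congr fun b => ?_
        rw [← ENNReal.tsum_mul_right]
    _ = ∑' a, ∑' b, p a * q a b * f b := ENNReal.tsum_comm
    _ = ∑' a, p a * ∑' b, q a b * f b := by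
        refine tsum_congr fun a => ?_
        rw [← ENNReal.tsum_mul_left]
        exact tsum_congr fun b => (mul_assoc _ _ _)

lemma ex_map {α β : Type*} (p : PMF α) (g : α → β) (f : β → ℝ≥0∞) :
    ex (p.map g) f = ex p (fun a => f (g a)) := by
  unfold PMF.map
  rw [ex_bind]
  exact tsum_congr fun a => by simp only [Function.comp_apply, ex_pure]

lemma ex_congr {α : Type*} {p : PMF α} {f g : α → ℝ≥0∞}
    (h : ∀ a ∈ p.support, f a = g a) : ex p f = ex p g := by
  refine tsum_congr fun a => ?_
  by_cases ha : a ∈ p.support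
  · rw [h a ha]
  · rw [PMF.mem_support_iff, not_not] at ha
    simp [ha]

lemma ex_mono {α : Type*} {p : PMF α} {f g : α → ℝ≥0∞}
    (h : ∀ a, f a ≤ g a) : ex p f ≤ ex p g :=
  ENNReal.tsum_le_tsum fun a => mul_le_mul_right (h a) _

lemma bind_congr' {α β : Type*} (p : PMF α) (q q' : α → PMF β)
    (h : ∀ a ∈ p.support, q a = q' a) : p.bind q = p.bind q' := by
  ext b
  simp only [PMF.bind_apply]
  refine tsum_congr fun a => ?_
  by_cases ha : a ∈ p.support
  · rw [h a ha]
  · rw [PMF.mem_support_iff, not_not] at ha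
    simp [ha]

end Aux

section Aux2

variable {d : ℕ}

lemma ex_conv {α : Type*} [AddCommMonoid α] (p q : PMF α) (f : α → ℝ≥0∞)
    (hf : ∀ a b, f (a + b) = f a * f b) :
    ex (conv p q) f = ex p f * ex q f := by
  unfold conv
  rw [ex_bind]
  have h : ∀ a, ex (q.bind fun b => PMF.pure (a + b)) f = f a * ex q f := by
    intro a
    rw [ex_bind]
    rw [ex_congr (g := fun b => f a * f b) (fun b _ => by rw [ex_pure, hf])]
    unfold ex
    rw [← ENNReal.tsum_mul_left]
    exact tsum_congr fun b => by ring
  rw [ex_congr (g := fun a => f a * ex q f) (fun a _ => h a)]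
  unfold ex
  rw [← ENNReal.tsum_mul_right]
  exact tsum_congr fun a => by ring

lemma ex_iterConv {α : Type*} [AddCommMonoid α] (p : PMF α) (f : α → ℝ≥0∞)
    (hf : ∀ a b, f (a + b) = f a * f b) (hf0 : f 0 = 1) (k : ℕ) :
    ex (iterConv p k) f = (ex p f) ^ k := by
  induction k with
  | zero => simp [iterConv, ex_pure, hf0]
  | succ k ih => rw [iterConv, ex_conv _ _ _ hf, ih, pow_succ, mul_comm]

lemma ex_fold_conv {α β : Type*} [AddCommMonoid α] (s : Finset β) (g : β → PMF α)
    (f : α → ℝ≥0∞) (hf : ∀ a b, f (a + b) = f a * f b) (hf0 : f 0 = 1) :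
    ex (Finset.fold conv (PMF.pure 0) g s) f = ∏ z ∈ s, ex (g z) f := by
  classical
  induction s using Finset.induction_on with
  | empty => simp [ex_pure, hf0]
  | insert _ _ hz ih =>
    rw [Finset.fold_insert hz, ex_conv _ _ _ hf, ih, Finset.prod_insert hz]

lemma ex_stepOf (child : Site d → PMF (Config d)) (η : Config d) (f : Config d → ℝ≥0∞)
    (hf : ∀ a b, f (a + b) = f a * f b) (hf0 : f 0 = 1) :
    ex (stepOf child η) f = η.prod fun z k => (ex (child z) f) ^ k := by
  unfold stepOf
  rw [ex_fold_conv _ _ _ hf hf0]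
  exact Finset.prod_congr rfl fun z _ => ex_iterConv _ _ hf hf0 _

lemma stepOf_zero (child : Site d → PMF (Config d)) : stepOf child 0 = PMF.pure 0 := by
  unfold stepOf
  simp

/-- `survProb` as an expectation. -/
lemma survProb_eq_ex (step : Config d → PMF (Config d)) (init : Config d) (n t : ℕ) :
    survProb step init n t
      = ex (pathLaw step init t) fun l => ind (∀ c ∈ l, avoids n c) := by
  unfold survProb
  rw [PMF.toMeasure_apply _ MeasurableSpace.measurableSet_top]
  refine tsum_congr fun l => ?_
  by_cases hl : ∀ c ∈ l, avoids n c
  · rw [Set.indicator_of_mem (show l ∈ {l : List (Config d) | ∀ c ∈ l, avoids n c} from hl)]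
    simp only [ind_true hl, mul_one]
  · rw [Set.indicator_of_notMem
      (show l ∉ {l : List (Config d) | ∀ c ∈ l, avoids n c} from hl)]
    simp only [ind_false hl, mul_zero]

lemma pathLaw_support_ne_nil (step : Config d → PMF (Config d)) (init : Config d) (t : ℕ) :
    ∀ l ∈ (pathLaw step init t).support, l ≠ [] := by
  induction t generalizing init with
  | zero =>
    intro l hl
    rw [pathLaw, PMF.support_pure] at hl
    simp only [Set.mem_singleton_iff] at hl
    subst hl; simp
  | succ t ih =>
    intro l hl
    rw [pathLaw] at hl
    simp only [PMF.support_bind, Set.mem_iUnion, PMF.support_map, Set.mem_image] at hl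
    obtain ⟨m, -, c, -, hc⟩ := hl
    subst hc; simp

lemma pathLaw_succ (step : Config d → PMF (Config d)) (init : Config d) (t : ℕ) :
    pathLaw step init (t + 1)
      = (step init).bind fun c => (pathLaw step c t).map fun l => l ++ [init] := by
  induction t generalizing init with
  | zero =>
    show (PMF.pure [init]).bind _ = _
    rw [PMF.pure_bind]
    refine congrArg _ (funext fun c => ?_)
    show _ = (PMF.pure [c]).map _
    rw [PMF.pure_map]
    rfl
  | succ t ih =>
    show (pathLaw step init (t + 1)).bind _ = _
    rw [ih, PMF.bind_bind]
    refine congrArg _ (funext fun c => ?_)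
    rw [PMF.bind_map]
    have h1 : ∀ l ∈ (pathLaw step c t).support,
        ((fun l => (step l.headI).map fun c' => c' :: l) ∘ fun l => l ++ [init]) l
          = ((step l.headI).map fun c' => c' :: l).map fun l => l ++ [init] := by
      intro l hl
      have hne := pathLaw_support_ne_nil step c t l hl
      have hh : (l ++ [init]).headI = l.headI := by
        cases l with
        | nil => exact absurd rfl hne
        | cons a l' => rfl
      show (step (l ++ [init]).headI).map _ = _
      rw [hh, PMF.map_comp]
      rfl
    rw [bind_congr' _ _ _ h1]
    rw [pathLaw]
    rw [PMF.map_bind]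

lemma avoids_zero (n : ℕ) : avoids n (0 : Config d) := fun _ _ => rfl

lemma avoids_add (n : ℕ) (η η' : Config d) :
    avoids n (η + η') ↔ avoids n η ∧ avoids n η' := by
  constructor
  · intro h
    constructor <;> intro z hz <;> have := h z hz <;>
      simp only [Finsupp.add_apply, Nat.add_eq_zero] at this
    · exact this.1
    · exact this.2
  · intro ⟨h1, h2⟩ z hz
    simp [Finsupp.add_apply, h1 z hz, h2 z hz]

/-- Basic recursion for survival probabilities. -/
lemma survProb_succ (step : Config d → PMF (Config d)) (init : Config d) (n t : ℕ) :
    survProb step init n (t + 1)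
      = ind (avoids n init) * ex (step init) fun c => survProb step c n t := by
  rw [survProb_eq_ex, pathLaw_succ, ex_bind]
  have h : ∀ c, ex ((pathLaw step c t).map fun l => l ++ [init])
        (fun l => ind (∀ x ∈ l, avoids n x))
      = ind (avoids n init) * survProb step c n t := by
    intro c
    rw [ex_map, survProb_eq_ex]
    have h2 : ∀ l : List (Config d), ind (∀ x ∈ l ++ [init], avoids n x)
        = ind (avoids n init) * ind (∀ x ∈ l, avoids n x) := by
      intro l
      rw [← ind_and]
      refine ind_congr ?_
      simp only [List.mem_append, List.mem_singleton]
      constructor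
      · intro h; exact ⟨h init (Or.inr rfl), fun x hx => h x (Or.inl hx)⟩
      · rintro ⟨h2, h1⟩ x (hx | rfl)
        · exact h1 x hx
        · exact h2
    rw [ex_congr (g := fun l => ind (avoids n init) * ind (∀ x ∈ l, avoids n x))
      (fun l _ => h2 l)]
    unfold ex
    rw [← ENNReal.tsum_mul_left]
    exact tsum_congr fun l => by ring
  rw [ex_congr (g := fun c => ind (avoids n init) * survProb step c n t) (fun c _ => h c)]
  unfold ex
  rw [← ENNReal.tsum_mul_left]
  exact tsum_congr fun c => by ring

end Aux2

section Aux3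

variable {d : ℕ}

lemma survProb_zero' (step : Config d → PMF (Config d)) (init : Config d) (n : ℕ) :
    survProb step init n 0 = ind (avoids n init) := by
  rw [survProb_eq_ex]
  show ex (PMF.pure [init]) _ = _
  rw [ex_pure]
  refine ind_congr ?_
  simp

lemma survProb_zero_config (child : Site d → PMF (Config d)) (n t : ℕ) :
    survProb (stepOf child) 0 n t = 1 := by
  induction t with
  | zero => rw [survProb_zero', ind_true (avoids_zero n)]
  | succ t ih =>
    rw [survProb_succ, stepOf_zero, ind_true (avoids_zero n), ex_pure, ih, one_mul]

lemma survProb_add (child : Site d → PMF (Config d)) (n : ℕ) (t : ℕ) :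
    ∀ η η' : Config d, survProb (stepOf child) (η + η') n t
      = survProb (stepOf child) η n t * survProb (stepOf child) η' n t := by
  induction t with
  | zero =>
    intro η η'
    simp only [survProb_zero']
    rw [← ind_and]
    exact ind_congr (avoids_add n η η')
  | succ t ih =>
    intro η η'
    simp only [survProb_succ]
    have hf0 : survProb (stepOf child) 0 n t = 1 := survProb_zero_config child n t
    have hstep : ∀ ξ : Config d, ex (stepOf child ξ) (fun c => survProb (stepOf child) c n t)
        = ξ.prod fun z k => (ex (child z) fun c => survProb (stepOf child) c n t) ^ k :=
      fun ξ => ex_stepOf child ξ _ ih hf0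
    rw [hstep, hstep, hstep, Finsupp.prod_add_index' (fun z => pow_zero _) fun z k k' => pow_add _ _ _]
    rw [ind_congr (avoids_add n η η'), ind_and]
    ring

/-- Single-particle survival probability for the aperiodic walk. -/
noncomputable def gg (P : PMF ℕ) (n : ℕ) (t : ℕ) (z : Site d) : ℝ≥0∞ :=
  survProb (aperiodicStep P) (Finsupp.single z 1) n t

/-- Probability generating function. -/
noncomputable def pgf (P : PMF ℕ) (s : ℝ≥0∞) : ℝ≥0∞ := ex P fun k => s ^ k

lemma pgf_mono (P : PMF ℕ) {s s' : ℝ≥0∞} (h : s ≤ s') : pgf P s ≤ pgf P s' :=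
  ex_mono fun k => pow_le_pow_left' h k

lemma avoids_single (n : ℕ) (z : Site d) :
    avoids n (Finsupp.single z 1) ↔ ¬ onBdry n z := by
  constructor
  · intro h hb
    have := h z hb
    simp at this
  · intro hz w hw
    exact Finsupp.single_eq_of_ne' fun he : z = w => hz (he ▸ hw)

lemma gg_zero (P : PMF ℕ) (n : ℕ) (z : Site d) :
    gg P n 0 z = ind (¬ onBdry n z) := by
  rw [gg, survProb_zero']
  exact ind_congr (avoids_single n z)

lemma gg_succ (P : PMF ℕ) (n t : ℕ) (z : Site d) :
    gg P n (t + 1) z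
      = ind (¬ onBdry n z)
        * pgf P (ex (unifOn (insert z (nbrs z))) fun w => gg P n t w) := by
  rw [gg, survProb_succ, ind_congr (avoids_single n z)]
  refine congrArg _ ?_
  show ex (stepOf (aperiodicChild P) (Finsupp.single z 1)) _ = _
  have hmult := survProb_add (d := d) (aperiodicChild P) n t
  have hf0 := survProb_zero_config (d := d) (aperiodicChild P) n t
  rw [ex_stepOf _ _ _ hmult hf0]
  rw [Finsupp.prod_single_index
    (h := fun w k => (ex (aperiodicChild P w) fun c => survProb (aperiodicStep P) c n t) ^ k)
    (pow_zero _), pow_one]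
  show ex (childLaw P (fun w => insert w (nbrs w)) z) _ = _
  rw [childLaw, ex_bind]
  rw [ex_congr (g := fun k =>
      (ex ((unifOn (insert z (nbrs z))).map fun w => Finsupp.single w 1)
        fun c => survProb (aperiodicStep P) c n t) ^ k)
    (fun k _ => ex_iterConv _ _ hmult hf0 k)]
  rw [pgf, ex_map]
  rfl

end Aux3

section Aux4

variable {d : ℕ}

/-- Moves of the aperiodic walk: stay, or one step in a coordinate direction. -/
abbrev Opt (d : ℕ) := Option (Fin d × Bool)

/-- The site reached from `z` by the move `o`. -/
def move (o : Opt d) (z : Site d) : Site d :=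
  match o with
  | none => z
  | some (i, s) => Function.update z i (z i + if s then 1 else -1)

lemma move_none (z : Site d) : move none z = z := rfl

lemma move_some (i : Fin d) (s : Bool) (z : Site d) :
    move (some (i, s)) z = Function.update z i (z i + if s then 1 else -1) := rfl

lemma sign_ne_zero (s : Bool) : (if s then (1 : ℤ) else -1) ≠ 0 := by cases s <;> simp

lemma update_add_ne (z : Site d) (i : Fin d) (e : ℤ) (he : e ≠ 0) :
    Function.update z i (z i + e) ≠ z := by
  intro h
  have := congrFun h i
  rw [Function.update_self] at this
  omega

lemma update_add_inj (z : Site d) (i j : Fin d) (e e' : ℤ) (he : e ≠ 0) (he' : e' ≠ 0)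
    (h : Function.update z i (z i + e) = Function.update z j (z j + e')) : i = j ∧ e = e' := by
  by_cases hij : i = j
  · subst hij
    have := congrFun h i
    rw [Function.update_self, Function.update_self] at this
    exact ⟨rfl, by omega⟩
  · have := congrFun h i
    rw [Function.update_self, Function.update_of_ne hij] at this
    omega

lemma move_injective (z : Site d) : Function.Injective fun o : Opt d => move o z := by
  rintro (_ | ⟨i, s⟩) (_ | ⟨j, r⟩) h
  · rfl
  · exact absurd h.symm (update_add_ne z j _ (sign_ne_zero r))
  · exact absurd h (update_add_ne z i _ (sign_ne_zero s))
  · obtain ⟨hij, he⟩ := update_add_inj z i j _ _ (sign_ne_zero s) (sign_ne_zero r) h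
    subst hij
    have : s = r := by
      cases s <;> cases r <;> simp_all
    rw [this]

lemma insert_nbrs_eq_image (z : Site d) :
    insert z (nbrs z) = Finset.image (fun o : Opt d => move o z) Finset.univ := by
  ext w
  simp only [Finset.mem_insert, nbrs, Finset.mem_image, Finset.mem_product, Finset.mem_univ,
    true_and, Finset.mem_insert, Finset.mem_singleton]
  constructor
  · rintro (rfl | ⟨⟨i, e⟩, he, hw⟩)
    · exact ⟨none, rfl⟩
    · refine ⟨some (i, e = 1), ?_⟩
      rw [move_some]
      rcases he with rfl | rfl
      · simpa using hw
      · simp only [show ¬((-1 : ℤ) = 1) by decide, if_false]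
        simpa using hw
  · rintro ⟨o, rfl⟩
    match o with
    | none => exact Or.inl rfl
    | some (i, s) =>
      refine Or.inr ⟨(i, if s then 1 else -1), ?_, rfl⟩
      cases s <;> simp

lemma card_insert_nbrs (z : Site d) :
    (insert z (nbrs z)).card = Fintype.card (Opt d) := by
  rw [insert_nbrs_eq_image z, Finset.card_image_of_injective _ (move_injective z),
    Finset.card_univ]

lemma insert_nbrs_nonempty (z : Site d) : (insert z (nbrs z)).Nonempty :=
  ⟨z, Finset.mem_insert_self z _⟩

lemma ex_unifOn {α : Type*} [Inhabited α] (s : Finset α) (hs : s.Nonempty) (h : α → ℝ≥0∞) :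
    ex (unifOn s) h = (s.card : ℝ≥0∞)⁻¹ * ∑ w ∈ s, h w := by
  unfold unifOn
  rw [dif_pos hs]
  unfold ex
  rw [tsum_eq_sum (s := s) fun b hb => by
    rw [PMF.uniformOfFinset_apply, if_neg hb, zero_mul]]
  rw [Finset.mul_sum]
  exact Finset.sum_congr rfl fun w hw => by rw [PMF.uniformOfFinset_apply, if_pos hw]

lemma ex_unifOn_moves (z : Site d) (h : Site d → ℝ≥0∞) :
    ex (unifOn (insert z (nbrs z))) h
      = (Fintype.card (Opt d) : ℝ≥0∞)⁻¹ * ∑ o : Opt d, h (move o z) := by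
  rw [ex_unifOn _ (insert_nbrs_nonempty z), card_insert_nbrs, insert_nbrs_eq_image z]
  refine congrArg _ ?_
  exact Finset.sum_image fun o _ o' _ hoo => move_injective z hoo

end Aux4

section Aux5

variable {d : ℕ}

/-- Reflection of coordinate `i`. -/
def flip (i : Fin d) (z : Site d) : Site d := Function.update z i (-(z i))

lemma abs_flip (i : Fin d) (z : Site d) (j : Fin d) : |flip i z j| = |z j| := by
  by_cases h : j = i
  · subst h; simp [flip]
  · simp [flip, Function.update_of_ne h]

lemma onBdry_flip (n : ℕ) (i : Fin d) (z : Site d) :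
    onBdry n (flip i z) ↔ onBdry n z := by
  unfold onBdry
  simp only [abs_flip]

/-- Swap the sign of moves in coordinate `i`. -/
def swapMove (i : Fin d) : Opt d → Opt d
  | none => none
  | some q => if q.1 = i then some (q.1, !q.2) else some q

lemma swapMove_invol (i : Fin d) : ∀ o : Opt d, swapMove i (swapMove i o) = o := by
  rintro (_ | ⟨j, s⟩)
  · rfl
  · by_cases h : j = i
    · subst h; simp [swapMove]
    · simp [swapMove, h]

/-- `swapMove` as a permutation. -/
def swapMoveEquiv (i : Fin d) : Opt d ≃ Opt d :=
  ⟨swapMove i, swapMove i, swapMove_invol i, swapMove_invol i⟩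

lemma move_flip (i : Fin d) (o : Opt d) (z : Site d) :
    move o (flip i z) = flip i (move (swapMove i o) z) := by
  match o with
  | none => rfl
  | some (j, s) =>
    by_cases h : j = i
    · subst h
      have hswap : swapMove j (some (j, s)) = some (j, !s) := by simp [swapMove]
      rw [hswap, move_some, move_some]
      unfold flip
      rw [Function.update_idem, Function.update_self, Function.update_idem,
        Function.update_self]
      refine congrArg _ ?_
      cases s <;> simp <;> ring
    · have hswap : swapMove i (some (j, s)) = some (j, s) := by simp [swapMove, h]
      rw [hswap, move_some, move_some]
      unfold flip
      funext k
      simp only [Function.update_apply]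
      by_cases hkj : k = j <;> by_cases hki : k = i <;>
        simp [hkj, hki, h, Ne.symm h, Function.update_apply]

lemma gg_flip (P : PMF ℕ) (n : ℕ) : ∀ (t : ℕ) (i : Fin d) (z : Site d),
    gg P n t (flip i z) = gg P n t z := by
  intro t
  induction t with
  | zero =>
    intro i z
    rw [gg_zero, gg_zero]
    exact ind_congr (not_congr (onBdry_flip n i z))
  | succ t ih =>
    intro i z
    rw [gg_succ, gg_succ, ind_congr (not_congr (onBdry_flip n i z))]
    refine congrArg _ (congrArg _ ?_)
    rw [ex_unifOn_moves, ex_unifOn_moves]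
    refine congrArg _ ?_
    calc ∑ o : Opt d, gg P n t (move o (flip i z))
        = ∑ o : Opt d, gg P n t (move (swapMove i o) z) := by
          refine Finset.sum_congr rfl fun o _ => ?_
          rw [move_flip, ih]
      _ = ∑ o : Opt d, gg P n t (move o z) :=
          Equiv.sum_comp (swapMoveEquiv i) fun o => gg P n t (move o z)

/-- Coordinatewise absolute value. -/
def absv (z : Site d) : Site d := fun j => |z j|

lemma gg_abs_aux (P : PMF ℕ) (n t : ℕ) :
    ∀ s : Finset (Fin d), ∀ z : Site d, (∀ j, j ∉ s → 0 ≤ z j) →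
      gg P n t z = gg P n t (absv z) := by
  classical
  intro s
  induction s using Finset.induction_on with
  | empty =>
    intro z hz
    have : absv z = z := funext fun j => abs_of_nonneg (hz j (Finset.notMem_empty j))
    rw [this]
  | @insert i s hi ihs =>
    intro z hz
    by_cases hzi : z i < 0
    · have h1 : gg P n t z = gg P n t (flip i z) := (gg_flip P n t i z).symm
      have h2 : gg P n t (flip i z) = gg P n t (absv (flip i z)) := by
        refine ihs (flip i z) fun j hj => ?_
        by_cases hji : j = i
        · subst hji; simp [flip]; omega
        · rw [show flip i z j = z j from Function.update_of_ne hji _ z]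
          exact hz j fun hmem => by
            rcases Finset.mem_insert.mp hmem with h | h
            · exact hji h
            · exact hj h
      have h3 : absv (flip i z) = absv z := funext fun j => abs_flip i z j
      rw [h1, h2, h3]
    · refine ihs z fun j hj => ?_
      by_cases hji : j = i
      · subst hji; omega
      · exact hz j fun hmem => by
          rcases Finset.mem_insert.mp hmem with h | h
          · exact hji h
          · exact hj h

lemma gg_abs (P : PMF ℕ) (n t : ℕ) (z : Site d) : gg P n t z = gg P n t (absv z) :=
  gg_abs_aux P n t Finset.univ z fun j hj => absurd (Finset.mem_univ j) hj

end Aux5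

section Aux6

variable {d : ℕ}

lemma abs_le_abs_of {x y : ℤ} (h1 : -y ≤ x) (h2 : x ≤ y) : |x| ≤ |y| := by
  have hy : 0 ≤ y := by omega
  rw [abs_of_nonneg hy]
  exact abs_le.mpr ⟨h1, h2⟩

lemma move_none_apply (z : Site d) (k : Fin d) : move none z k = z k := rfl

lemma move_some_apply (j : Fin d) (s : Bool) (z : Site d) (k : Fin d) :
    move (some (j, s)) z k = if k = j then z j + (if s then 1 else -1) else z k := by
  rw [move_some, Function.update_apply]

lemma itrue : (if (true : Bool) then (1 : ℤ) else -1) = 1 := rfl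
lemma ifalse : (if (false : Bool) then (1 : ℤ) else -1) = -1 := rfl

/-- Comparison of survival probabilities via coordinatewise absolute values. -/
lemma gg_cmp (P : PMF ℕ) (n t : ℕ)
    (IH : ∀ a b : Site d, (∀ j, 0 ≤ a j) → (∀ j, a j ≤ b j) → (∀ j, b j ≤ (n : ℤ)) →
      gg P n t b ≤ gg P n t a)
    (u w : Site d) (habs : ∀ j, |u j| ≤ |w j|) (hwn : ∀ j, |w j| ≤ (n : ℤ)) :
    gg P n t w ≤ gg P n t u := by
  rw [gg_abs P n t w, gg_abs P n t u]
  exact IH (absv u) (absv w) (fun j => abs_nonneg _) habs hwn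

/-- The 3-cycle pairing used in the single-step comparison. -/
def cyc (i : Fin d) : Opt d → Opt d
  | none => some (i, true)
  | some q => if q.1 = i then (if q.2 then some (i, false) else none) else some q

def cycInv (i : Fin d) : Opt d → Opt d
  | none => some (i, false)
  | some q => if q.1 = i then (if q.2 then none else some (i, true)) else some q

lemma cyc_left (i : Fin d) : ∀ o, cycInv i (cyc i o) = o := by
  rintro (_ | ⟨j, s⟩)
  · simp [cyc, cycInv]
  · by_cases h : j = i
    · subst h; cases s <;> simp [cyc, cycInv]
    · simp [cyc, cycInv, h]

lemma cyc_right (i : Fin d) : ∀ o, cyc i (cycInv i o) = o := by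
  rintro (_ | ⟨j, s⟩)
  · simp [cyc, cycInv]
  · by_cases h : j = i
    · subst h; cases s <;> simp [cyc, cycInv]
    · simp [cyc, cycInv, h]

def cycEquiv (i : Fin d) : Opt d ≃ Opt d := ⟨cyc i, cycInv i, cyc_left i, cyc_right i⟩

lemma cycEquiv_apply (i : Fin d) (o : Opt d) : cycEquiv i o = cyc i o := rfl

/-- The single-coordinate-increment step of the monotonicity induction. -/
lemma gg_step (P : PMF ℕ) (n : ℕ) (hn : 1 ≤ n) (t : ℕ)
    (IH : ∀ a b : Site d, (∀ j, 0 ≤ a j) → (∀ j, a j ≤ b j) → (∀ j, b j ≤ (n : ℤ)) →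
      gg P n t b ≤ gg P n t a)
    (a : Site d) (i : Fin d) (ha : ∀ j, 0 ≤ a j)
    (hbn : ∀ j, Function.update a i (a i + 1) j ≤ (n : ℤ)) :
    gg P n (t + 1) (Function.update a i (a i + 1)) ≤ gg P n (t + 1) a := by
  set b := Function.update a i (a i + 1) with hbdef
  have hb_apply : ∀ k, b k = if k = i then a i + 1 else a k := fun k => by
    rw [hbdef, Function.update_apply]
  have hb0 : ∀ k, 0 ≤ b k := by
    intro k
    rw [hb_apply k]
    split
    · have := ha i; omega
    · exact ha k
  by_cases hB : onBdry n b
  · rw [gg_succ, ind_false (not_not_intro hB), zero_mul]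
    exact zero_le
  · have habsn : ∀ k, |b k| ≤ (n : ℤ) := fun k =>
      abs_le.mpr ⟨by have := hb0 k; omega, hbn k⟩
    have hlt : ∀ k, b k ≤ (n : ℤ) - 1 := by
      intro k
      by_contra hk
      exact hB ⟨habsn, ⟨k, by rw [abs_of_nonneg (hb0 k)]; have := hbn k; omega⟩⟩
    have haleb : ∀ k, a k ≤ b k := by
      intro k
      rw [hb_apply k]
      split
      · rename_i hk; rw [hk]; omega
      · exact le_refl _
    have hA : ¬ onBdry n a := by
      rintro ⟨-, j, hj⟩
      rw [abs_of_nonneg (ha j)] at hj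
      have h1 := haleb j
      have h2 := hlt j
      omega
    rw [gg_succ, gg_succ, ind_true hB, ind_true hA, one_mul, one_mul]
    refine pgf_mono P ?_
    rw [ex_unifOn_moves, ex_unifOn_moves]
    refine mul_le_mul_right ?_ _
    rw [← Equiv.sum_comp (cycEquiv i) (fun o => gg P n t (move o a))]
    refine Finset.sum_le_sum fun o _ => ?_
    show gg P n t (move o b) ≤ gg P n t (move (cycEquiv i o) a)
    rw [cycEquiv_apply]
    refine gg_cmp P n t IH (move (cyc i o) a) (move o b) ?_ ?_
    · -- coordinatewise abs comparison
      intro k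
      rcases o with - | ⟨j, s⟩
      · rw [show cyc i none = some (i, true) from rfl, move_none_apply, move_some_apply,
          itrue, hb_apply k]
      · by_cases hj : i = j
        · subst hj
          cases s
          · rw [show cyc i (some (i, false)) = none from by simp [cyc], move_none_apply,
              move_some_apply, ifalse]
            by_cases hk : k = i
            · rw [if_pos hk, hb_apply i, if_pos rfl, hk]
              have h2 : a i + 1 + -1 = a i := by ring
              rw [h2]
            · rw [if_neg hk, hb_apply k, if_neg hk]
          · rw [show cyc i (some (i, true)) = some (i, false) from by simp [cyc],
              move_some_apply, move_some_apply, itrue, ifalse]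
            by_cases hk : k = i
            · rw [if_pos hk, if_pos hk, hb_apply i, if_pos rfl]
              have hai := ha i
              have h2 : a i + 1 + 1 = a i + 2 := by ring
              rw [h2]
              exact abs_le_abs_of (by omega) (by omega)
            · rw [if_neg hk, if_neg hk, hb_apply k, if_neg hk]
        · rw [show cyc i (some (j, s)) = some (j, s) from by simp [cyc, Ne.symm hj],
            move_some_apply, move_some_apply]
          by_cases hk : k = j
          · rw [if_pos hk, if_pos hk, hb_apply j, if_neg (Ne.symm hj)]
          · rw [if_neg hk, if_neg hk, hb_apply k]
            by_cases hki : k = i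
            · rw [if_pos hki, hki]
              have hai := ha i
              exact abs_le_abs_of (by omega) (by omega)
            · rw [if_neg hki]
    · -- coordinatewise bound by n
      intro k
      rcases o with - | ⟨j, s⟩
      · rw [move_none_apply]; exact habsn k
      · rw [move_some_apply]
        by_cases hk : k = j
        · rw [if_pos hk]
          have he : (if s then (1:ℤ) else -1) = 1 ∨ (if s then (1:ℤ) else -1) = -1 := by
            cases s
            · exact Or.inr rfl
            · exact Or.inl rfl
          have h1 := hlt j
          have h2 := hb0 j
          have h3 : 1 ≤ n := hn
          rcases he with he | he <;> rw [he] <;>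
            exact abs_le.mpr ⟨by omega, by omega⟩
        · rw [if_neg hk]; exact habsn k

/-- Chaining single-coordinate increments. -/
lemma gg_chain (P : PMF ℕ) (n : ℕ) (hn : 1 ≤ n) (t : ℕ)
    (IH : ∀ a b : Site d, (∀ j, 0 ≤ a j) → (∀ j, a j ≤ b j) → (∀ j, b j ≤ (n : ℤ)) →
      gg P n t b ≤ gg P n t a) :
    ∀ K : ℕ, ∀ a b : Site d, (∀ j, 0 ≤ a j) → (∀ j, a j ≤ b j) → (∀ j, b j ≤ (n : ℤ)) →
      (∑ j, (b j - a j)) ≤ (K : ℤ) → gg P n (t + 1) b ≤ gg P n (t + 1) a := by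
  intro K
  induction K with
  | zero =>
    intro a b ha hab hbn hsum
    have : a = b := by
      funext j
      by_contra hj
      have hj' : a j + 1 ≤ b j := by have := hab j; omega
      have h1 : b j - a j ≤ ∑ k, (b k - a k) :=
        Finset.single_le_sum (f := fun k => b k - a k)
          (fun k _ => sub_nonneg.mpr (hab k)) (Finset.mem_univ j)
      omega
    rw [this]
  | succ K ihK =>
    intro a b ha hab hbn hsum
    by_cases hab' : a = b
    · rw [hab']
    · have hex : ∃ j, a j ≠ b j := by
        by_contra hc
        push_neg at hc
        exact hab' (funext hc)
      obtain ⟨j, hj⟩ := hex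
      have hj' : a j + 1 ≤ b j := by have := hab j; omega
      set a' := Function.update a j (a j + 1) with ha'def
      have ha'_apply : ∀ k, a' k = if k = j then a j + 1 else a k := fun k => by
        rw [ha'def, Function.update_apply]
      refine le_trans (ihK a' b ?_ ?_ hbn ?_) ?_
      · intro k; rw [ha'_apply]; split
        · have := ha j; omega
        · exact ha k
      · intro k; rw [ha'_apply]; split
        · rename_i hk; rw [hk]; exact hj'
        · exact hab k
      · have hsum' : ∑ k, (b k - a' k) = (∑ k, (b k - a k)) - 1 := by
          have hpt : ∀ k ∈ Finset.univ, b k - a' k = (b k - a k) - (if k = j then 1 else 0) := by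
            intro k _
            rw [ha'_apply]
            by_cases hk : k = j
            · rw [if_pos hk, if_pos hk, hk]; ring
            · rw [if_neg hk, if_neg hk]; ring
          rw [Finset.sum_congr rfl hpt, Finset.sum_sub_distrib,
            Finset.sum_ite_eq' Finset.univ j fun _ => (1 : ℤ)]
          simp
        omega
      · exact gg_step P n hn t IH a j ha fun k => by
          rw [Function.update_apply]
          by_cases hk : k = j
          · rw [if_pos hk]
            have h1 := hbn j
            omega
          · rw [if_neg hk]
            exact le_trans (hab k) (hbn k)

/-- Main monotonicity of single-particle survival probabilities. -/
lemma gg_mono (P : PMF ℕ) (n : ℕ) (hn : 1 ≤ n) :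
    ∀ t : ℕ, ∀ a b : Site d, (∀ j, 0 ≤ a j) → (∀ j, a j ≤ b j) → (∀ j, b j ≤ (n : ℤ)) →
      gg P n t b ≤ gg P n t a := by
  intro t
  induction t with
  | zero =>
    intro a b ha hab hbn
    rw [gg_zero, gg_zero]
    by_cases hA : onBdry n a
    · have hb : onBdry n b := by
        obtain ⟨-, j, hj⟩ := hA
        rw [abs_of_nonneg (ha j)] at hj
        refine ⟨fun k => abs_le.mpr ⟨by have := ha k; have := hab k; omega, hbn k⟩, j, ?_⟩
        have h1 := hab j
        have h2 := hbn j
        rw [abs_of_nonneg (by have := ha j; omega : (0:ℤ) ≤ b j)]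
        omega
      rw [ind_false (not_not_intro hb)]
      exact zero_le
    · rw [ind_true hA]
      exact ind_le_one _
  | succ t ih =>
    intro a b ha hab hbn
    exact gg_chain P n hn t ih (∑ j, (b j - a j)).toNat a b ha hab hbn (Int.self_le_toNat _)

end Aux6

/-- For the aperiodic nearest-neighbors branching random walk on `ℤ^d`
with offspring distribution `P`, for every `n ≥ 1` and all `x ⪯ y` in the intersection of the
positive orthant with the interior of `Λ_n`, we have `τ_n^y ≤_st τ_n^x`, i.e.
`ℙ(τ_n^y > t) ≤ ℙ(τ_n^x > t)` for every `t`. -/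
theorem aperiodic_hittingTime_stochastically_monotone
    (d : ℕ) (hd : 0 < d) (P : PMF ℕ) (n : ℕ) (hn : 1 ≤ n)
    (x y : Site d) (hx0 : 0 ≤ x) (hy0 : 0 ≤ y) (hxy : x ≤ y)
    (hx : inInterior n x) (hy : inInterior n y) (t : ℕ) :
    survProb (aperiodicStep P) (Finsupp.single y 1) n t
      ≤ survProb (aperiodicStep P) (Finsupp.single x 1) n t := by
  refine gg_mono P n hn t x y (fun i => hx0 i) (fun i => hxy i) fun i => ?_
  have h1 := hy i
  have h2 := abs_lt.mp h1
  omega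

end BRW
end

section
/- Let (β_t^{(0,0)}) and (β_t^{(1,0)}) be aperiodic nearest-neighbors branching random walks on ℤ² started by a single particle at (0,0) and at (1,0) respectively, with the same offspring distribution 𝒫. For every n ≥ 1 there exists a coupling of the two processes on a common probability space such that τ_n^{(1,0)} ≤ τ_n^{(0,0)} almost surely; in particular τ_n^{(1,0)} ≤_st τ_n^{(0,0)}. -/
open scoped ENNReal
open MeasureTheory Filter

namespace BRW

section Sec1

variable {γ δ : Type*}

section ConvAlg

variable {α β : Type*} [AddCommMonoid α] [AddCommMonoid β]

noncomputable instance convMonoid : CommMonoid (PMF α) where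
  mul := conv
  one := PMF.pure 0
  mul_assoc := Std.Associative.assoc (op := conv)
  mul_comm := Std.Commutative.comm (op := conv)
  one_mul p := by
    show conv (PMF.pure 0) p = p
    simp [conv, PMF.pure_bind, zero_add, PMF.bind_pure]
  mul_one p := by
    show conv p (PMF.pure 0) = p
    simp [conv, PMF.pure_bind, add_zero, PMF.bind_pure]

lemma mul_def (p q : PMF α) : p * q = conv p q := rfl

lemma one_def : (1 : PMF α) = PMF.pure 0 := rfl

lemma iterConv_add (p : PMF α) (m k : ℕ) :
    iterConv p (m + k) = iterConv p m * iterConv p k := by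
  induction m with
  | zero => rw [Nat.zero_add]; exact (one_mul (iterConv p k)).symm
  | succ m ih =>
      have : m + 1 + k = (m + k) + 1 := by omega
      rw [this]
      show conv p (iterConv p (m+k)) = conv p (iterConv p m) * iterConv p k
      rw [ih]
      rw [← mul_def, ← mul_def, mul_assoc]

lemma map_conv (f : α → β) (hf : ∀ a b, f (a + b) = f a + f b) (p q : PMF α) :
    (conv p q).map f = conv (p.map f) (q.map f) := by
  simp only [conv, PMF.map_bind, PMF.bind_map, PMF.pure_map, Function.comp_def, hf]

lemma map_one' (f : α → β) (hf : f 0 = 0) : (1 : PMF α).map f = 1 := by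
  simp [one_def, PMF.pure_map, hf]

/-- `PMF.map` along an additive map, as a monoid hom for convolution. -/
noncomputable def convHom (φ : α →+ β) : PMF α →* PMF β where
  toFun := PMF.map φ
  map_one' := map_one' φ (map_zero φ)
  map_mul' p q := map_conv φ (map_add φ) p q

lemma map_iterConv (φ : α →+ β) (p : PMF α) (k : ℕ) :
    (iterConv p k).map φ = iterConv (p.map φ) k := by
  induction k with
  | zero => exact map_one' φ (map_zero φ)
  | succ k ih =>
      show (conv p (iterConv p k)).map φ = conv (p.map φ) (iterConv (p.map φ) k)
      rw [map_conv φ (map_add φ), ih]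

end ConvAlg

lemma bind_congr'' (p : PMF γ) (f g : γ → PMF δ) (h : ∀ a ∈ p.support, f a = g a) :
    p.bind f = p.bind g := by
  ext b
  simp only [PMF.bind_apply]
  refine tsum_congr fun a => ?_
  by_cases ha : p a = 0
  · simp [ha]
  · rw [h a (by rwa [PMF.mem_support_iff])]

lemma map_unifOn [Inhabited γ] [Inhabited δ] [DecidableEq δ] {s : Finset γ} (hs : s.Nonempty) (g : γ → δ)
    (hg : Set.InjOn g s) : (unifOn s).map g = unifOn (s.image g) := by
  classical
  rw [unifOn, dif_pos hs, unifOn, dif_pos (hs.image g)]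
  ext b
  rw [PMF.map_apply, PMF.uniformOfFinset_apply]
  by_cases hb : b ∈ s.image g
  · obtain ⟨a₀, ha₀, rfl⟩ := Finset.mem_image.1 hb
    rw [if_pos hb]
    refine (tsum_eq_single a₀ ?_).trans ?_
    · intro a ha
      by_cases has : a ∈ s
      · by_cases he : g a₀ = g a
        · exact absurd (hg has ha₀ he.symm) ha
        · simp [he]
      · simp [PMF.uniformOfFinset_apply, has]
    · rw [if_pos rfl, PMF.uniformOfFinset_apply, if_pos ha₀,
        Finset.card_image_of_injOn hg]
  · rw [if_neg hb]
    refine ENNReal.tsum_eq_zero.2 fun a => ?_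
    by_cases has : a ∈ s
    · have : b ≠ g a := fun he => hb (Finset.mem_image.2 ⟨a, has, he.symm⟩)
      simp [this]
    · simp [PMF.uniformOfFinset_apply, has]

section Supp

/-- All elements of the support of `p` satisfy `Q`. -/
def PGood (Q : γ → Prop) (p : PMF γ) : Prop := ∀ a ∈ p.support, Q a

variable {Q : γ → Prop}

lemma PGood.bind {p : PMF δ} {f : δ → PMF γ} (h : ∀ a ∈ p.support, PGood Q (f a)) :
    PGood Q (p.bind f) := by
  intro c hc
  rw [PMF.support_bind] at hc
  obtain ⟨a, ha, hc⟩ := Set.mem_iUnion₂.1 hc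
  exact h a ha c hc

lemma PGood.map {p : PMF δ} {f : δ → γ} (h : ∀ a ∈ p.support, Q (f a)) :
    PGood Q (p.map f) := by
  intro c hc
  rw [PMF.support_map] at hc
  obtain ⟨a, ha, rfl⟩ := hc
  exact h a ha

variable {α : Type*} [AddCommMonoid α] {Q : α → Prop}

lemma PGood.one (h0 : Q 0) : PGood Q (1 : PMF α) := by
  intro a ha
  rw [one_def, PMF.support_pure] at ha
  rwa [Set.mem_singleton_iff.1 ha]

lemma PGood.mul (hadd : ∀ a b, Q a → Q b → Q (a + b)) {p q : PMF α}
    (hp : PGood Q p) (hq : PGood Q q) : PGood Q (p * q) := by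
  rw [mul_def]
  refine PGood.bind fun a ha => PGood.bind fun b hb => ?_
  intro c hc
  rw [PMF.support_pure] at hc
  rw [Set.mem_singleton_iff.1 hc]
  exact hadd a b (hp a ha) (hq b hb)

lemma PGood.iterConv (hadd : ∀ a b, Q a → Q b → Q (a + b)) (h0 : Q 0) {p : PMF α}
    (hp : PGood Q p) (k : ℕ) : PGood Q (iterConv p k) := by
  induction k with
  | zero => exact PGood.one h0
  | succ k ih => exact PGood.mul hadd hp ih
      
lemma PGood.prod (hadd : ∀ a b, Q a → Q b → Q (a + b)) (h0 : Q 0) {s : Finset δ}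
    {f : δ → PMF α} (h : ∀ i ∈ s, PGood Q (f i)) : PGood Q (∏ i ∈ s, f i) :=
  Finset.prod_induction f (PGood Q) (fun _ _ => PGood.mul hadd) (PGood.one h0) h

end Supp

lemma stepOf_eq_prod {d : ℕ} (child : Site d → PMF (Config d)) (η : Config d) :
    stepOf child η = η.prod fun z k => iterConv (child z) k := by
  rw [Finsupp.prod, Finset.prod_eq_fold]
  rfl

end Sec1
section Sec2

/-! Combinatorial core: coordinates, the coupling map. -/

/-- Extensionality for sites of `ℤ²`. -/
lemma site2_ext {w v : Site 2} (h0 : w 0 = v 0) (h1 : w 1 = v 1) : w = v := by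
  funext i
  fin_cases i <;> assumption

@[simp] lemma vec2_zero (a b : ℤ) : (![a, b] : Site 2) 0 = a := rfl
@[simp] lemma vec2_one (a b : ℤ) : (![a, b] : Site 2) 1 = b := rfl

lemma update_mem_nbrs {d : ℕ} (z : Site d) (i : Fin d) (s : ℤ) (hs : s = 1 ∨ s = -1) :
    Function.update z i (z i + s) ∈ nbrs z := by
  refine Finset.mem_image.2 ⟨(i, s), ?_, rfl⟩
  simp only [Finset.mem_product, Finset.mem_univ, true_and, Finset.mem_insert,
    Finset.mem_singleton]
  exact hs

lemma mem_NN {z w : Site 2} :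
    w ∈ insert z (nbrs z) ↔
      ((w 1 = z 1 ∧ (w 0 - z 0).natAbs ≤ 1) ∨ (w 0 = z 0 ∧ (w 1 - z 1).natAbs = 1)) := by
  constructor
  · intro h
    rcases Finset.mem_insert.1 h with rfl | h
    · left
      exact ⟨rfl, by simp⟩
    · rw [nbrs, Finset.mem_image] at h
      obtain ⟨⟨i, s⟩, hp, rfl⟩ := h
      simp only [Finset.mem_product, Finset.mem_univ, true_and, Finset.mem_insert,
        Finset.mem_singleton] at hp
      have hi : i = 0 ∨ i = 1 := by omega
      rcases hi with rfl | rfl <;> dsimp only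
      · left
        rw [Function.update_of_ne (by decide), Function.update_self]
        exact ⟨rfl, by rcases hp with rfl | rfl <;> simp⟩
      · right
        rw [Function.update_of_ne (by decide), Function.update_self]
        exact ⟨rfl, by rcases hp with rfl | rfl <;> simp⟩
  · rintro (⟨h1, h0⟩ | ⟨h0, h1⟩)
    · rcases (by omega : w 0 = z 0 ∨ w 0 = z 0 + 1 ∨ w 0 = z 0 + (-1)) with he | he | he
      · exact Finset.mem_insert.2 (Or.inl (site2_ext he h1))
      · refine Finset.mem_insert.2 (Or.inr ?_)
        have : w = Function.update z 0 (z 0 + 1) := by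
          refine site2_ext ?_ ?_
          · rw [Function.update_self]; exact he
          · rw [Function.update_of_ne (by decide)]; exact h1
        rw [this]; exact update_mem_nbrs z 0 1 (Or.inl rfl)
      · refine Finset.mem_insert.2 (Or.inr ?_)
        have : w = Function.update z 0 (z 0 + (-1)) := by
          refine site2_ext ?_ ?_
          · rw [Function.update_self]; exact he
          · rw [Function.update_of_ne (by decide)]; exact h1
        rw [this]; exact update_mem_nbrs z 0 (-1) (Or.inr rfl)
    · rcases (by omega : w 1 = z 1 + 1 ∨ w 1 = z 1 + (-1)) with he | he
      · refine Finset.mem_insert.2 (Or.inr ?_)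
        have : w = Function.update z 1 (z 1 + 1) := by
          refine site2_ext ?_ ?_
          · rw [Function.update_of_ne (by decide)]; exact h0
          · rw [Function.update_self]; exact he
        rw [this]; exact update_mem_nbrs z 1 1 (Or.inl rfl)
      · refine Finset.mem_insert.2 (Or.inr ?_)
        have : w = Function.update z 1 (z 1 + (-1)) := by
          refine site2_ext ?_ ?_
          · rw [Function.update_of_ne (by decide)]; exact h0
          · rw [Function.update_self]; exact he
        rw [this]; exact update_mem_nbrs z 1 (-1) (Or.inr rfl)

/-- The one-dimensional coupling bijection on first coordinates. -/
def Gmap (a b u : ℤ) : ℤ :=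
  if a = 0 ∧ b = 1 then (if u = -1 then 2 else u)
  else if a = 0 ∧ b = -1 then (if u = 1 then -2 else u)
  else b + ((if 0 ≤ a then 1 else -1) * (if 0 ≤ b then 1 else -1)) * (u - a)

lemma Gmap_absLe {a b u : ℤ} (h : a.natAbs ≤ b.natAbs) (hu : (u - a).natAbs ≤ 1) :
    u.natAbs ≤ (Gmap a b u).natAbs := by
  unfold Gmap
  split_ifs <;> omega

lemma Gmap_close {a b u : ℤ} (hu : (u - a).natAbs ≤ 1) : (Gmap a b u - b).natAbs ≤ 1 := by
  unfold Gmap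
  split_ifs <;> omega

lemma Gmap_inj {a b u v : ℤ} (hu : (u - a).natAbs ≤ 1) (hv : (v - a).natAbs ≤ 1)
    (h : Gmap a b u = Gmap a b v) : u = v := by
  unfold Gmap at h
  split_ifs at h <;> omega

lemma Gmap_surj {a b v : ℤ} (hv : (v - b).natAbs ≤ 1) :
    ∃ u : ℤ, (u - a).natAbs ≤ 1 ∧ Gmap a b u = v := by
  have d1 : Gmap a b (a - 1) ≠ Gmap a b a := fun h => by
    have := Gmap_inj (a := a) (b := b) (by omega) (by omega) h; omega
  have d2 : Gmap a b (a - 1) ≠ Gmap a b (a + 1) := fun h => by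
    have := Gmap_inj (a := a) (b := b) (by omega) (by omega) h; omega
  have d3 : Gmap a b a ≠ Gmap a b (a + 1) := fun h => by
    have := Gmap_inj (a := a) (b := b) (by omega) (by omega) h; omega
  have c1 := Gmap_close (a := a) (b := b) (u := a - 1) (by omega)
  have c2 := Gmap_close (a := a) (b := b) (u := a) (by omega)
  have c3 := Gmap_close (a := a) (b := b) (u := a + 1) (by omega)
  have : Gmap a b (a - 1) = v ∨ Gmap a b a = v ∨ Gmap a b (a + 1) = v := by omega
  rcases this with h | h | h
  · exact ⟨a - 1, by omega, h⟩
  · exact ⟨a, by omega, h⟩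
  · exact ⟨a + 1, by omega, h⟩

/-- The two-dimensional coupling map, sending children of `x` to children of `y`. -/
def Fmap (x y w : Site 2) : Site 2 :=
  if w 1 = x 1 then ![Gmap (x 0) (y 0) (w 0), y 1] else ![y 0, y 1 + (w 1 - x 1)]

/-- The domination relation between paired particles. -/
def Rp (x y : Site 2) : Prop := x 1 = y 1 ∧ (x 0).natAbs ≤ (y 0).natAbs

lemma Rp_Fmap {x y w : Site 2} (hR : Rp x y) (hw : w ∈ insert x (nbrs x)) :
    Rp w (Fmap x y w) := by
  obtain ⟨hR1, hR0⟩ := hR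
  rcases mem_NN.1 hw with ⟨h1, h0⟩ | ⟨h0, h1⟩
  · rw [Fmap, if_pos h1]
    exact ⟨by rw [vec2_one]; omega, by rw [vec2_zero]; exact Gmap_absLe hR0 h0⟩
  · rw [Fmap, if_neg (by omega)]
    exact ⟨by rw [vec2_one]; omega, by rw [vec2_zero]; omega⟩

lemma Fmap_mem {x y w : Site 2} (hw : w ∈ insert x (nbrs x)) :
    Fmap x y w ∈ insert y (nbrs y) := by
  rcases mem_NN.1 hw with ⟨h1, h0⟩ | ⟨h0, h1⟩
  · rw [Fmap, if_pos h1]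
    exact mem_NN.2 (Or.inl ⟨rfl, by rw [vec2_zero]; exact Gmap_close h0⟩)
  · rw [Fmap, if_neg (by omega)]
    refine mem_NN.2 ?_
    by_cases hz : w 1 = x 1 + (y 1 - y 1)
    · omega
    · exact Or.inr ⟨rfl, by rw [vec2_one]; omega⟩

lemma Fmap_injOn {x y : Site 2} :
    Set.InjOn (Fmap x y) (insert x (nbrs x) : Finset (Site 2)) := by
  intro w hw v hv h
  rcases mem_NN.1 (by exact_mod_cast hw) with ⟨hw1, hw0⟩ | ⟨hw0, hw1⟩ <;>
    rcases mem_NN.1 (by exact_mod_cast hv) with ⟨hv1, hv0⟩ | ⟨hv0, hv1⟩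
  · rw [Fmap, if_pos hw1, Fmap, if_pos hv1] at h
    have h0 : Gmap (x 0) (y 0) (w 0) = Gmap (x 0) (y 0) (v 0) := by
      have := congrFun h 0; simpa using this
    exact site2_ext (Gmap_inj hw0 hv0 h0) (by omega)
  · exfalso
    rw [Fmap, if_pos hw1, Fmap, if_neg (by omega)] at h
    have := congrFun h 1; simp at this; omega
  · exfalso
    rw [Fmap, if_neg (by omega), Fmap, if_pos hv1] at h
    have := congrFun h 1; simp at this; omega
  · rw [Fmap, if_neg (by omega), Fmap, if_neg (by omega)] at h
    have := congrFun h 1; simp at this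
    exact site2_ext (by omega) (by omega)

lemma Fmap_image {x y : Site 2} (hR : Rp x y) :
    (insert x (nbrs x)).image (Fmap x y) = insert y (nbrs y) := by
  apply Finset.Subset.antisymm
  · intro v hv
    obtain ⟨w, hw, rfl⟩ := Finset.mem_image.1 hv
    exact Fmap_mem hw
  · intro v hv
    rcases mem_NN.1 hv with ⟨h1, h0⟩ | ⟨h0, h1⟩
    · obtain ⟨u, hu, hGu⟩ := Gmap_surj (a := x 0) h0
      refine Finset.mem_image.2 ⟨![u, x 1], ?_, ?_⟩
      · exact mem_NN.2 (Or.inl ⟨by rw [vec2_one], by rw [vec2_zero]; exact hu⟩)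
      · rw [Fmap, if_pos (by rw [vec2_one])]
        exact site2_ext (by rw [vec2_zero, vec2_zero, hGu]) (by rw [vec2_one]; omega)
    · obtain ⟨hRy, -⟩ := hR
      refine Finset.mem_image.2 ⟨![x 0, x 1 + (v 1 - y 1)], ?_, ?_⟩
      · exact mem_NN.2 (Or.inr ⟨by rw [vec2_zero], by rw [vec2_one]; omega⟩)
      · rw [Fmap, if_neg (by rw [vec2_one]; omega)]
        exact site2_ext (by rw [vec2_zero]; omega) (by rw [vec2_one, vec2_one]; omega)

lemma Fmap_close {x y w : Site 2} (hw : w ∈ insert x (nbrs x)) (j : Fin 2) :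
    (Fmap x y w j - y j).natAbs ≤ 1 := by
  rcases mem_NN.1 hw with ⟨h1, h0⟩ | ⟨h0, h1⟩ <;> rw [Fmap]
  · rw [if_pos h1]
    fin_cases j
    · simpa using Gmap_close h0
    · simp
  · rw [if_neg (by omega)]
    fin_cases j
    · simp
    · simpa using (by omega : (y 1 + (w 1 - x 1) - y 1).natAbs ≤ 1)

/-- Pairing of two planar sites into a site of `ℤ⁴`. -/
def pairSite (x y : Site 2) : Site 4 := ![x 0, x 1, y 0, y 1]

def pr0 (z : Site 4) : Site 2 := ![z 0, z 1]
def pr1 (z : Site 4) : Site 2 := ![z 2, z 3]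

@[simp] lemma pr0_pairSite (x y : Site 2) : pr0 (pairSite x y) = x := by
  funext i; fin_cases i <;> rfl

@[simp] lemma pr1_pairSite (x y : Site 2) : pr1 (pairSite x y) = y := by
  funext i; fin_cases i <;> rfl

lemma pairSite_pr (z : Site 4) : pairSite (pr0 z) (pr1 z) = z := by
  funext i; fin_cases i <;> rfl

lemma pairSite_injective : Function.Injective (Function.uncurry pairSite) := by
  intro p q h
  have h0 := congrArg pr0 h
  have h1 := congrArg pr1 h
  simp only [Function.uncurry] at h0 h1
  rw [pr0_pairSite, pr0_pairSite] at h0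
  rw [pr1_pairSite, pr1_pairSite] at h1
  exact Prod.ext h0 h1

end Sec2
section Sec3

variable (P : PMF ℕ)

/-- The coupled neighborhood: pairs `(w, Fmap x y w)` for `w` in the aperiodic
neighborhood of `x`, where `z` encodes the pair `(x, y)`. -/
noncomputable def cnbr (z : Site 4) : Finset (Site 4) :=
  (insert (pr0 z) (nbrs (pr0 z))).image fun w => pairSite w (Fmap (pr0 z) (pr1 z) w)

/-- One-step transition of the coupled branching random walk. -/
noncomputable def cstep : Config 4 → PMF (Config 4) := stepOf (childLaw P cnbr)

/-- Initial coupled configuration: one paired particle at `((0,0),(1,0))`. -/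
noncomputable def cinit : Config 4 := Finsupp.single (pairSite ![0, 0] ![1, 0]) 1

lemma NN_nonempty (x : Site 2) : (insert x (nbrs x)).Nonempty := ⟨x, Finset.mem_insert_self x _⟩

lemma emb_injOn (x y : Site 2) :
    Set.InjOn (fun w => pairSite w (Fmap x y w)) (insert x (nbrs x) : Finset (Site 2)) := by
  intro w _ v _ h
  have := congrArg pr0 h
  rwa [pr0_pairSite, pr0_pairSite] at this

lemma unifOn_cnbr (z : Site 4) :
    unifOn (cnbr z) =
      (unifOn (insert (pr0 z) (nbrs (pr0 z)))).map
        (fun w => pairSite w (Fmap (pr0 z) (pr1 z) w)) :=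
  (map_unifOn (NN_nonempty (pr0 z)) _ (emb_injOn _ _)).symm

/-- Marginal of the coupled children law on the first coordinate. -/
lemma map_pr0_cchild (z : Site 4) :
    (childLaw P cnbr z).map (Finsupp.mapDomain pr0) = aperiodicChild P (pr0 z) := by
  rw [childLaw, aperiodicChild, childLaw, PMF.map_bind]
  refine congrArg _ (funext fun n => ?_)
  rw [show PMF.map (Finsupp.mapDomain (M := ℕ) pr0)
      = PMF.map ⇑(Finsupp.mapDomain.addMonoidHom (M := ℕ) pr0) from rfl, map_iterConv]
  refine congrArg (fun q => iterConv q n) ?_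
  rw [PMF.map_comp, unifOn_cnbr, PMF.map_comp]
  have hfg : (⇑(Finsupp.mapDomain.addMonoidHom (M := ℕ) pr0) ∘ fun w : Site 4 =>
        Finsupp.single w 1) ∘ (fun w => pairSite w (Fmap (pr0 z) (pr1 z) w))
      = fun w : Site 2 => Finsupp.single (M := ℕ) w 1 := by
    funext w
    show Finsupp.mapDomain pr0 (Finsupp.single (pairSite w (Fmap (pr0 z) (pr1 z) w)) 1)
        = Finsupp.single w 1
    rw [Finsupp.mapDomain_single, pr0_pairSite]
  rw [hfg]

/-- Marginal of the coupled children law on the second coordinate (needs `Rp`). -/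
lemma map_pr1_cchild (z : Site 4) (hR : Rp (pr0 z) (pr1 z)) :
    (childLaw P cnbr z).map (Finsupp.mapDomain pr1) = aperiodicChild P (pr1 z) := by
  rw [childLaw, aperiodicChild, childLaw, PMF.map_bind]
  refine congrArg _ (funext fun n => ?_)
  rw [show PMF.map (Finsupp.mapDomain (M := ℕ) pr1)
      = PMF.map ⇑(Finsupp.mapDomain.addMonoidHom (M := ℕ) pr1) from rfl, map_iterConv]
  refine congrArg (fun q => iterConv q n) ?_
  rw [PMF.map_comp, unifOn_cnbr, PMF.map_comp]
  have hfg : (⇑(Finsupp.mapDomain.addMonoidHom (M := ℕ) pr1) ∘ fun w : Site 4 =>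
        Finsupp.single w 1) ∘ (fun w => pairSite w (Fmap (pr0 z) (pr1 z) w))
      = (fun w : Site 2 => Finsupp.single (M := ℕ) w 1) ∘ Fmap (pr0 z) (pr1 z) := by
    funext w
    show Finsupp.mapDomain pr1 (Finsupp.single (pairSite w (Fmap (pr0 z) (pr1 z) w)) 1)
        = Finsupp.single (Fmap (pr0 z) (pr1 z) w) 1
    rw [Finsupp.mapDomain_single, pr1_pairSite]
  rw [hfg, ← PMF.map_comp,
    map_unifOn (NN_nonempty (pr0 z)) _ (Fmap_injOn.mono (by simp)), Fmap_image hR]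

/-- Pushing a branching step forward along a projection of sites. -/
lemma map_stepOf {d d' : ℕ} (pr : Site d → Site d') (child : Site d → PMF (Config d))
    (child' : Site d' → PMF (Config d')) (η : Config d)
    (h : ∀ z ∈ η.support, (child z).map (Finsupp.mapDomain pr) = child' (pr z)) :
    (stepOf child η).map (Finsupp.mapDomain pr) = stepOf child' (Finsupp.mapDomain pr η) := by
  rw [stepOf_eq_prod, stepOf_eq_prod]
  rw [Finsupp.prod_mapDomain_index (fun w => rfl) (fun w m k => iterConv_add _ m k)]
  rw [show PMF.map (Finsupp.mapDomain (M := ℕ) pr)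
      = ⇑(convHom (Finsupp.mapDomain.addMonoidHom (M := ℕ) pr)) from rfl]
  rw [Finsupp.prod, Finsupp.prod, map_prod]
  refine Finset.prod_congr rfl fun z hz => ?_
  show (iterConv (child z) (η z)).map ⇑(Finsupp.mapDomain.addMonoidHom (M := ℕ) pr) = _
  rw [map_iterConv]
  exact congrArg (fun q => iterConv q (η z)) (h z hz)

/-- All sites in the support of the configuration are dominating pairs. -/
def RsuppC (c : Config 4) : Prop := ∀ z ∈ c.support, Rp (pr0 z) (pr1 z)

lemma RsuppC_zero : RsuppC 0 := by intro z hz; simp at hz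

lemma RsuppC_add {a b : Config 4} (ha : RsuppC a) (hb : RsuppC b) : RsuppC (a + b) := by
  intro z hz
  rcases Finset.mem_union.1 (Finsupp.support_add hz) with h | h
  · exact ha z h
  · exact hb z h

lemma RsuppC_cinit : RsuppC cinit := by
  intro z hz
  have := Finsupp.support_single_subset hz
  rw [Finset.mem_singleton] at this
  subst this
  rw [pr0_pairSite, pr1_pairSite]
  exact ⟨rfl, by simp⟩

lemma cstep_Rgood {c : Config 4} (hc : RsuppC c) : PGood RsuppC (cstep P c) := by
  rw [cstep, stepOf_eq_prod, Finsupp.prod]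
  refine PGood.prod (fun a b => RsuppC_add) RsuppC_zero fun z hz => ?_
  refine PGood.iterConv (fun a b => RsuppC_add) RsuppC_zero ?_ _
  refine PGood.bind fun n _ => ?_
  refine PGood.iterConv (fun a b => RsuppC_add) RsuppC_zero ?_ _
  refine PGood.map fun w hw => ?_
  rw [unifOn, dif_pos (show (cnbr z).Nonempty from
    ⟨_, Finset.mem_image_of_mem _ (Finset.mem_insert_self (pr0 z) _)⟩)] at hw
  rw [PMF.mem_support_uniformOfFinset_iff, cnbr, Finset.mem_image] at hw
  obtain ⟨w', hw', rfl⟩ := hw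
  intro p hp
  have := Finsupp.support_single_subset hp
  rw [Finset.mem_singleton] at this
  subst this
  rw [pr0_pairSite, pr1_pairSite]
  exact Rp_Fmap (hc z hz) hw'

/-- Every particle pair of `c'` is (in its second coordinate) within distance one of a
particle pair of `c`. -/
def AdjC (c' c : Config 4) : Prop :=
  ∀ q ∈ c'.support, ∃ p ∈ c.support, ∀ j, (pr1 q j - pr1 p j).natAbs ≤ 1

lemma AdjC_zero (c : Config 4) : AdjC 0 c := by intro q hq; simp at hq

lemma AdjC_add {a b c : Config 4} (ha : AdjC a c) (hb : AdjC b c) : AdjC (a + b) c := by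
  intro q hq
  rcases Finset.mem_union.1 (Finsupp.support_add hq) with h | h
  · exact ha q h
  · exact hb q h

lemma cstep_Adj (c : Config 4) : PGood (AdjC · c) (cstep P c) := by
  rw [cstep, stepOf_eq_prod, Finsupp.prod]
  refine PGood.prod (Q := (AdjC · c)) (fun a b => AdjC_add) (AdjC_zero c) fun z hz => ?_
  refine PGood.iterConv (Q := (AdjC · c)) (fun a b => AdjC_add) (AdjC_zero c) ?_ _
  refine PGood.bind fun n _ => ?_
  refine PGood.iterConv (Q := (AdjC · c)) (fun a b => AdjC_add) (AdjC_zero c) ?_ _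
  refine PGood.map fun w hw => ?_
  rw [unifOn, dif_pos (show (cnbr z).Nonempty from
    ⟨_, Finset.mem_image_of_mem _ (Finset.mem_insert_self (pr0 z) _)⟩)] at hw
  rw [PMF.mem_support_uniformOfFinset_iff, cnbr, Finset.mem_image] at hw
  obtain ⟨w', hw', rfl⟩ := hw
  intro q hq
  have := Finsupp.support_single_subset hq
  rw [Finset.mem_singleton] at this
  subst this
  refine ⟨z, hz, fun j => ?_⟩
  rw [pr1_pairSite]
  exact Fmap_close hw' j

/-- Good trajectory prefixes (newest first). -/
def GoodL (l : List (Config 4)) : Prop :=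
  l ≠ [] ∧ l.getLast? = some cinit ∧ (∀ c ∈ l, RsuppC c) ∧ l.Chain' AdjC

lemma pathLaw_good (t : ℕ) : PGood GoodL (pathLaw (cstep P) cinit t) := by
  induction t with
  | zero =>
      intro l hl
      rw [pathLaw, PMF.support_pure, Set.mem_singleton_iff] at hl
      subst hl
      exact ⟨by simp, by simp, fun c hc => by
        rw [List.mem_singleton] at hc; subst hc; exact RsuppC_cinit, by simp [List.Chain']⟩
  | succ t ih =>
      rw [pathLaw]
      refine PGood.bind fun l hl => PGood.map fun c' hc' => ?_
      obtain ⟨hne, hlast, hR, hchain⟩ := ih l hl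
      obtain ⟨h, rest, rfl⟩ : ∃ h rest, l = h :: rest := by
        cases l with
        | nil => exact absurd rfl hne
        | cons h rest => exact ⟨h, rest, rfl⟩
      refine ⟨by simp, by rwa [List.getLast?_cons_cons], ?_, ?_⟩
      · intro c hc
        rcases List.mem_cons.1 hc with rfl | hc
        · exact cstep_Rgood P (hR _ (List.mem_cons_self)) _ hc'
        · exact hR c hc
      · simp only [List.Chain', List.isChain_cons_cons]
        exact ⟨cstep_Adj P h c' hc', hchain⟩

lemma pathLaw_ne_nil {d : ℕ} (step : Config d → PMF (Config d)) (init : Config d) (t : ℕ) :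
    ∀ l ∈ (pathLaw step init t).support, l ≠ [] := by
  induction t with
  | zero =>
      intro l hl
      rw [pathLaw, PMF.support_pure, Set.mem_singleton_iff] at hl
      subst hl; simp
  | succ t ih =>
      intro l hl
      rw [pathLaw, PMF.support_bind] at hl
      obtain ⟨l', _, hl⟩ := Set.mem_iUnion₂.1 hl
      rw [PMF.support_map] at hl
      obtain ⟨c, _, rfl⟩ := hl
      simp

end Sec3
section Sec3b

variable (P : PMF ℕ)

lemma map_cstep0 (c : Config 4) :
    (cstep P c).map (Finsupp.mapDomain pr0) = aperiodicStep P (Finsupp.mapDomain pr0 c) :=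
  map_stepOf pr0 _ _ c fun z _ => map_pr0_cchild P z

lemma map_cstep1 {c : Config 4} (hc : RsuppC c) :
    (cstep P c).map (Finsupp.mapDomain pr1) = aperiodicStep P (Finsupp.mapDomain pr1 c) :=
  map_stepOf pr1 _ _ c fun z hz => map_pr1_cchild P z (hc z hz)

lemma headI_mem_of_ne_nil {α : Type*} [Inhabited α] {l : List α} (h : l ≠ []) : l.headI ∈ l := by
  cases l with
  | nil => exact absurd rfl h
  | cons a l => exact List.mem_cons_self

lemma map_pathLaw_aux (pr : Site 4 → Site 2) (init2 : Config 2)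
    (hinit : Finsupp.mapDomain pr cinit = init2)
    (hstep : ∀ t : ℕ, ∀ l ∈ (pathLaw (cstep P) cinit t).support,
      (cstep P l.headI).map (Finsupp.mapDomain pr)
        = aperiodicStep P (Finsupp.mapDomain pr l.headI)) :
    ∀ t, (pathLaw (cstep P) cinit t).map (List.map (Finsupp.mapDomain pr))
      = pathLaw (aperiodicStep P) init2 t := by
  intro t
  induction t with
  | zero =>
      rw [pathLaw, pathLaw, PMF.pure_map]
      refine congrArg _ ?_
      rw [List.map_singleton, hinit]
  | succ t ih =>
      rw [pathLaw, pathLaw, PMF.map_bind, ← ih, PMF.bind_map]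
      refine bind_congr'' _ _ _ fun l hl => ?_
      have hne : l ≠ [] := pathLaw_ne_nil _ _ t l hl
      rw [PMF.map_comp]
      have h1 : (List.map (Finsupp.mapDomain (M := ℕ) pr) ∘ fun c => c :: l)
          = (fun c2 => c2 :: List.map (Finsupp.mapDomain pr) l) ∘ Finsupp.mapDomain pr := by
        funext c; rfl
      rw [h1, ← PMF.map_comp, hstep t l hl]
      have h2 : Finsupp.mapDomain (M := ℕ) pr l.headI
          = (List.map (Finsupp.mapDomain (M := ℕ) pr) l).headI := by
        cases l with
        | nil => exact absurd rfl hne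
        | cons a l => rfl
      rw [h2]
      rfl

lemma map_pathLaw0 (t : ℕ) :
    (pathLaw (cstep P) cinit t).map (List.map (Finsupp.mapDomain pr0))
      = pathLaw (aperiodicStep P) (Finsupp.single ![0, 0] 1) t :=
  map_pathLaw_aux P pr0 _
    (by rw [cinit, Finsupp.mapDomain_single, pr0_pairSite])
    (fun t l _ => map_cstep0 P l.headI) t

lemma map_pathLaw1 (t : ℕ) :
    (pathLaw (cstep P) cinit t).map (List.map (Finsupp.mapDomain pr1))
      = pathLaw (aperiodicStep P) (Finsupp.single ![1, 0] 1) t :=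
  map_pathLaw_aux P pr1 _
    (by rw [cinit, Finsupp.mapDomain_single, pr1_pairSite])
    (fun t l hl => by
      obtain ⟨hne, -, hR, -⟩ := pathLaw_good P t l hl
      exact map_cstep1 P (hR _ (headI_mem_of_ne_nil hne))) t

end Sec3b
section Sec4

noncomputable instance : Encodable (Config 4) := Encodable.ofCountable _

variable (P : PMF ℕ)

/-- Mass of the `k`-th element in a fixed enumeration of configurations. -/
noncomputable def qm (q : PMF (Config 4)) (k : ℕ) : ℝ≥0∞ :=
  ∑' c : Config 4, if Encodable.encode c = k then q c else 0

lemma qm_encode (q : PMF (Config 4)) (c : Config 4) : qm q (Encodable.encode c) = q c := by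
  rw [qm, tsum_eq_single c fun b hb => if_neg fun h => hb (Encodable.encode_injective h),
    if_pos rfl]

lemma qm_ne_zero {q : PMF (Config 4)} {k : ℕ} (h : qm q k ≠ 0) :
    ∃ c : Config 4, Encodable.encode c = k := by
  by_contra hc
  push_neg at hc
  exact h (by rw [qm]; exact ENNReal.tsum_eq_zero.2 fun c => if_neg (hc c))

lemma tsum_qm (q : PMF (Config 4)) : ∑' k, qm q k = 1 := by
  have : ∑' (k : ℕ) (c : Config 4), (if Encodable.encode c = k then q c else 0)
      = ∑' (c : Config 4) (k : ℕ), (if Encodable.encode c = k then q c else 0) :=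
    ENNReal.tsum_comm
  rw [show (fun k => qm q k) = fun k => ∑' c, if Encodable.encode c = k then q c else 0 from rfl,
    this]
  have hinner : ∀ c : Config 4, (∑' k : ℕ, if Encodable.encode c = k then q c else 0) = q c :=
    fun c => by
      rw [tsum_eq_single (Encodable.encode c) fun k hk => if_neg fun h => hk h.symm, if_pos rfl]
  rw [tsum_congr hinner]
  exact q.tsum_coe

/-- Cumulative distribution along the enumeration. -/
noncomputable def cums (q : PMF (Config 4)) (k : ℕ) : ℝ :=
  (∑ i ∈ Finset.range k, qm q i).toReal

lemma qm_partial_le_one (q : PMF (Config 4)) (k : ℕ) : ∑ i ∈ Finset.range k, qm q i ≤ 1 :=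
  le_trans (ENNReal.sum_le_tsum _) (le_of_eq (tsum_qm q))

lemma qm_partial_ne_top (q : PMF (Config 4)) (k : ℕ) :
    ∑ i ∈ Finset.range k, qm q i ≠ ⊤ :=
  fun h => by simpa [h] using qm_partial_le_one q k

lemma cums_nonneg (q : PMF (Config 4)) (k : ℕ) : 0 ≤ cums q k := ENNReal.toReal_nonneg

lemma cums_le_one (q : PMF (Config 4)) (k : ℕ) : cums q k ≤ 1 := by
  have := ENNReal.toReal_mono (by simp) (qm_partial_le_one q k)
  simpa [cums] using this

lemma cums_zero (q : PMF (Config 4)) : cums q 0 = 0 := by simp [cums]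

lemma cums_succ (q : PMF (Config 4)) (k : ℕ) :
    cums q (k + 1) = cums q k + (qm q k).toReal := by
  rw [cums, Finset.sum_range_succ,
    ENNReal.toReal_add (qm_partial_ne_top q k)
      (fun h => by simpa [h] using (le_trans (ENNReal.le_tsum k) (le_of_eq (tsum_qm q)))), cums]

lemma cums_mono (q : PMF (Config 4)) : Monotone (cums q) := by
  intro k m hkm
  exact ENNReal.toReal_mono (qm_partial_ne_top q m)
    (Finset.sum_le_sum_of_subset (Finset.range_subset_range.2 hkm))

lemma exists_cums_gt (q : PMF (Config 4)) {y : ℝ} (hy : y < 1) : ∃ k, y < cums q k := by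
  rcases lt_or_ge y 0 with h | h
  · exact ⟨0, by rw [cums_zero]; exact h⟩
  · have h1 : (1 : ℝ≥0∞) = ⨆ k, ∑ i ∈ Finset.range k, qm q i := by
      rw [← ENNReal.tsum_eq_iSup_nat, tsum_qm]
    have h2 : ENNReal.ofReal y < 1 := by
      rw [show (1 : ℝ≥0∞) = ENNReal.ofReal 1 by simp]
      exact (ENNReal.ofReal_lt_ofReal_iff one_pos).2 hy
    rw [h1] at h2
    obtain ⟨k, hk⟩ := lt_iSup_iff.1 h2
    refine ⟨k, ?_⟩
    have := (ENNReal.toReal_lt_toReal ENNReal.ofReal_ne_top (qm_partial_ne_top q k)).2 hk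
    rwa [ENNReal.toReal_ofReal h] at this

/-- Division points of an interval according to the cumulative distribution. -/
noncomputable def ptr (q : PMF (Config 4)) (a b : ℝ) (k : ℕ) : ℝ := a + (b - a) * cums q k

lemma ptr_zero (q : PMF (Config 4)) (a b : ℝ) : ptr q a b 0 = a := by simp [ptr, cums_zero]

lemma ptr_mono (q : PMF (Config 4)) {a b : ℝ} (hab : a ≤ b) {k m : ℕ} (h : k ≤ m) :
    ptr q a b k ≤ ptr q a b m := by
  have := mul_le_mul_of_nonneg_left (cums_mono q h) (sub_nonneg.2 hab)
  rw [ptr, ptr]; linarith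

lemma ptr_le (q : PMF (Config 4)) {a b : ℝ} (hab : a ≤ b) (k : ℕ) : ptr q a b k ≤ b := by
  have h1 := cums_le_one q k
  have h2 := cums_nonneg q k
  have h3 : (b - a) * cums q k ≤ (b - a) * 1 :=
    mul_le_mul_of_nonneg_left h1 (sub_nonneg.2 hab)
  rw [ptr]; linarith

lemma ptr_ge (q : PMF (Config 4)) {a b : ℝ} (hab : a ≤ b) (k : ℕ) : a ≤ ptr q a b k := by
  exact le_trans (le_of_eq (ptr_zero q a b).symm) (ptr_mono q hab (Nat.zero_le k))

open scoped Classical in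
/-- Index selector: in which division subinterval does `x` fall. -/
noncomputable def ksel (q : PMF (Config 4)) (a b x : ℝ) : ℕ :=
  if h : ∃ k, x < ptr q a b (k + 1) then Nat.find h else 0

/-- The next state of the chain. -/
noncomputable def nxt (q : PMF (Config 4)) (a b x : ℝ) : Config 4 :=
  (Encodable.decode₂ (Config 4) (ksel q a b x)).getD default

lemma ksel_exists (q : PMF (Config 4)) {a b x : ℝ} (ha : a ≤ x) (hb : x < b) :
    ∃ k, x < ptr q a b (k + 1) := by
  have hba : (0 : ℝ) < b - a := by linarith
  have h1 : (x - a) / (b - a) < 1 := (div_lt_one hba).2 (by linarith)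
  obtain ⟨k, hk⟩ := exists_cums_gt q h1
  have h2 : x - a < (b - a) * cums q k := by
    rw [div_lt_iff₀ hba] at hk; linarith [hk]
  refine ⟨k, lt_of_lt_of_le ?_ (ptr_mono q (by linarith) (Nat.le_succ k))⟩
  rw [ptr]; linarith

lemma ksel_spec (q : PMF (Config 4)) {a b x : ℝ} (ha : a ≤ x) (hb : x < b) :
    ptr q a b (ksel q a b x) ≤ x ∧ x < ptr q a b (ksel q a b x + 1) ∧
      qm q (ksel q a b x) ≠ 0 := by
  have hex := ksel_exists q ha hb
  have hup : x < ptr q a b (ksel q a b x + 1) := by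
    rw [ksel, dif_pos hex]; exact Nat.find_spec hex
  have hlow : ptr q a b (ksel q a b x) ≤ x := by
    rw [ksel, dif_pos hex]
    rcases hK : Nat.find hex with _ | m
    · rw [ptr_zero]; exact ha
    · have := Nat.find_min hex (show m < Nat.find hex by omega)
      exact not_lt.1 this
  refine ⟨hlow, hup, fun h0 => ?_⟩
  have : ptr q a b (ksel q a b x + 1) = ptr q a b (ksel q a b x) := by
    rw [ptr, ptr, cums_succ, h0]; simp
  rw [this] at hup
  linarith

lemma nxt_eq_iff (q : PMF (Config 4)) {a b x : ℝ} (ha : a ≤ x) (hb : x < b) (c : Config 4) :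
    nxt q a b x = c ↔
      (ptr q a b (Encodable.encode c) ≤ x ∧ x < ptr q a b (Encodable.encode c + 1)) := by
  have hab : a ≤ b := le_trans ha (le_of_lt hb)
  obtain ⟨hlow, hup, hqm⟩ := ksel_spec q ha hb
  obtain ⟨c₀, hc₀⟩ := qm_ne_zero hqm
  have hdec : Encodable.decode₂ (Config 4) (ksel q a b x) = some c₀ :=
    Encodable.mem_decode₂.2 hc₀
  have hnxt : nxt q a b x = c₀ := by rw [nxt, hdec]; rfl
  constructor
  · rintro rfl
    rw [hnxt] at *
    rw [hc₀]
    exact ⟨hlow, hup⟩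
  · rintro ⟨h1, h2⟩
    have hkeq : ksel q a b x = Encodable.encode c := by
      have hle : ksel q a b x ≤ Encodable.encode c := by
        rw [ksel, dif_pos (ksel_exists q ha hb)]
        exact Nat.find_min' _ h2
      rcases lt_or_eq_of_le hle with hlt | heq
      · exfalso
        have : ptr q a b (ksel q a b x + 1) ≤ ptr q a b (Encodable.encode c) :=
          ptr_mono q hab (by omega)
        linarith
      · exact heq
    rw [nxt, hkeq, Encodable.decode₂_encode]
    rfl

/-- The trajectory of the coupled chain, driven by a single uniform sample `x`:
current configuration together with the current dyadic-like interval. -/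
noncomputable def traj : ℕ → ℝ → Config 4 × ℝ × ℝ
  | 0 => fun _ => (cinit, 0, 1)
  | t + 1 => fun x =>
      let s := traj t x
      let q := cstep P s.1
      let c := nxt q s.2.1 s.2.2 x
      (c, ptr q s.2.1 s.2.2 (Encodable.encode c), ptr q s.2.1 s.2.2 (Encodable.encode c + 1))

lemma traj_mem (t : ℕ) {x : ℝ} (hx0 : 0 ≤ x) (hx1 : x < 1) :
    (traj P t x).2.1 ≤ x ∧ x < (traj P t x).2.2 := by
  induction t with
  | zero => exact ⟨hx0, hx1⟩
  | succ t ih =>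
      obtain ⟨ha, hb⟩ := ih
      obtain ⟨h1, h2, -⟩ := ksel_spec (cstep P (traj P t x).1) ha hb
      have := (nxt_eq_iff (cstep P (traj P t x).1) ha hb
        (nxt (cstep P (traj P t x).1) (traj P t x).2.1 (traj P t x).2.2 x)).1 rfl
      exact ⟨this.1, this.2⟩

/-- Interval associated to a prefix list (newest configuration first). -/
noncomputable def ivl : List (Config 4) → ℝ × ℝ
  | [] => (0, 1)
  | [c] => if c = cinit then (0, 1) else (1, 1)
  | c :: h :: r =>
      (ptr (cstep P (h :: r).headI) (ivl (h :: r)).1 (ivl (h :: r)).2 (Encodable.encode c),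
       ptr (cstep P (h :: r).headI) (ivl (h :: r)).1 (ivl (h :: r)).2 (Encodable.encode c + 1))

lemma ivl_bounds : ∀ l : List (Config 4),
    0 ≤ (ivl P l).1 ∧ (ivl P l).1 ≤ (ivl P l).2 ∧ (ivl P l).2 ≤ 1 := by
  intro l
  induction l with
  | nil => norm_num [ivl]
  | cons c l' ih =>
      cases l' with
      | nil =>
          by_cases hc : c = cinit <;> simp [ivl, hc]
      | cons h r =>
          obtain ⟨h0, hab, h1⟩ := ih
          refine ⟨le_trans h0 (ptr_ge _ hab _), ptr_mono _ hab (Nat.le_succ _),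
            le_trans (ptr_le _ hab _) h1⟩

/-- The raw prefix of the trajectory, newest first. -/
noncomputable def prefR (t : ℕ) (x : ℝ) : List (Config 4) :=
  (List.range (t + 1)).map fun s => (traj P (t - s) x).1

lemma prefR_zero (x : ℝ) : prefR P 0 x = [cinit] := rfl

lemma prefR_succ (t : ℕ) (x : ℝ) :
    prefR P (t + 1) x = (traj P (t + 1) x).1 :: prefR P t x := by
  rw [prefR, List.range_succ_eq_map, List.map_cons, List.map_map]
  refine congrArg _ ?_
  rw [prefR]
  refine List.map_congr_left fun s _ => ?_
  show (traj P (t + 1 - (s + 1)) x).1 = (traj P (t - s) x).1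
  congr 2
  omega

lemma prefR_headI (t : ℕ) (x : ℝ) : (prefR P t x).headI = (traj P t x).1 := by
  cases t with
  | zero => rfl
  | succ t => rw [prefR_succ]; rfl

lemma prefR_length (t : ℕ) (x : ℝ) : (prefR P t x).length = t + 1 := by
  rw [prefR, List.length_map, List.length_range]

/-- Main identification: the prefix equals `l` exactly when `x` lies in the interval of `l`. -/
lemma main_iff : ∀ (t : ℕ) {x : ℝ}, 0 ≤ x → x < 1 → ∀ l : List (Config 4), l.length = t + 1 →
    (prefR P t x = l ↔ ((ivl P l).1 ≤ x ∧ x < (ivl P l).2)) ∧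
      (prefR P t x = l → (traj P t x).2.1 = (ivl P l).1 ∧ (traj P t x).2.2 = (ivl P l).2) := by
  intro t
  induction t with
  | zero =>
      intro x hx0 hx1 l hl
      obtain ⟨c, l', rfl⟩ : ∃ c l', l = c :: l' := by
        cases l with
        | nil => simp at hl
        | cons c l' => exact ⟨c, l', rfl⟩
      have hl' : l' = [] := by simpa using hl
      subst hl'
      constructor
      · rw [prefR_zero]
        constructor
        · intro h
          have hc : c = cinit := by simpa using h.symm
          subst hc
          rw [ivl, if_pos rfl]
          exact ⟨hx0, hx1⟩
        · intro h
          by_cases hc : c = cinit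
          · rw [hc]
          · rw [ivl, if_neg hc] at h
            simp only at h
            linarith [h.1, h.2]
      · intro h
        have hc : c = cinit := by rw [prefR_zero] at h; simpa using h.symm
        subst hc
        rw [ivl, if_pos rfl]
        exact ⟨rfl, rfl⟩
  | succ t ih =>
      intro x hx0 hx1 l hl
      obtain ⟨c, l', rfl⟩ : ∃ c l', l = c :: l' := by
        cases l with
        | nil => simp at hl
        | cons c l' => exact ⟨c, l', rfl⟩
      have hl' : l'.length = t + 1 := by simpa using hl
      obtain ⟨hmem1, hmem2⟩ := traj_mem P t hx0 hx1
      obtain ⟨ihiff, ihtraj⟩ := ih hx0 hx1 l' hl'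
      obtain ⟨h', r', rfl⟩ : ∃ h' r', l' = h' :: r' := by
        cases l' with
        | nil => simp at hl'
        | cons h' r' => exact ⟨h', r', rfl⟩
      have hsplit : prefR P (t + 1) x = c :: h' :: r' ↔
          ((traj P (t + 1) x).1 = c ∧ prefR P t x = h' :: r') := by
        rw [prefR_succ]
        constructor
        · intro h
          exact ⟨by injection h, by injection h with _ h2⟩
        · rintro ⟨h1, h2⟩
          rw [h1, h2]
      constructor
      · rw [hsplit]
        constructor
        · rintro ⟨h1, h2⟩
          obtain ⟨ha, hb⟩ := ihtraj h2
          have hhead : (traj P t x).1 = (h' :: r').headI := by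
            rw [← prefR_headI P t x, h2]
          have := (nxt_eq_iff (cstep P (traj P t x).1) hmem1 hmem2 c).1 (by
            rw [← h1]
            show (traj P (t+1) x).1 = _
            rfl)
          rw [hhead, ha, hb] at this
          exact this
        · intro h
          have hsub : (ivl P (h' :: r')).1 ≤ x ∧ x < (ivl P (h' :: r')).2 := by
            obtain ⟨b0, bab, b1⟩ := ivl_bounds P (h' :: r')
            constructor
            · exact le_trans (ptr_ge _ bab _) h.1
            · exact lt_of_lt_of_le h.2 (ptr_le _ bab _)
          have h2 : prefR P t x = h' :: r' := ihiff.2 hsub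
          obtain ⟨ha, hb⟩ := ihtraj h2
          have hhead : (traj P t x).1 = (h' :: r').headI := by
            rw [← prefR_headI P t x, h2]
          refine ⟨?_, h2⟩
          show nxt (cstep P (traj P t x).1) (traj P t x).2.1 (traj P t x).2.2 x = c
          rw [(nxt_eq_iff (cstep P (traj P t x).1) hmem1 hmem2 c), hhead, ha, hb]
          exact h
      · intro h
        obtain ⟨h1, h2⟩ := hsplit.1 h
        obtain ⟨ha, hb⟩ := ihtraj h2
        have hhead : (traj P t x).1 = (h' :: r').headI := by
          rw [← prefR_headI P t x, h2]
        constructor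
        · show ptr (cstep P (traj P t x).1) (traj P t x).2.1 (traj P t x).2.2
            (Encodable.encode ((traj P (t+1) x).1)) = _
          have h1' : nxt (cstep P (traj P t x).1) (traj P t x).2.1 (traj P t x).2.2 x = c := h1
          rw [show Encodable.encode ((traj P (t+1) x).1)
            = Encodable.encode (nxt (cstep P (traj P t x).1) (traj P t x).2.1
              (traj P t x).2.2 x) from rfl, h1', hhead, ha, hb]
          rfl
        · show ptr (cstep P (traj P t x).1) (traj P t x).2.1 (traj P t x).2.2
            (Encodable.encode ((traj P (t+1) x).1) + 1) = _
          have h1' : nxt (cstep P (traj P t x).1) (traj P t x).2.1 (traj P t x).2.2 x = c := h1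
          rw [show Encodable.encode ((traj P (t+1) x).1)
            = Encodable.encode (nxt (cstep P (traj P t x).1) (traj P t x).2.1
              (traj P t x).2.2 x) from rfl, h1', hhead, ha, hb]
          rfl

end Sec4
section Sec4b

variable (P : PMF ℕ)

lemma pathLaw_cons_apply {d : ℕ} (step : Config d → PMF (Config d)) (init : Config d)
    (t : ℕ) (c : Config d) (l : List (Config d)) :
    pathLaw step init (t + 1) (c :: l) = pathLaw step init t l * step l.headI c := by
  rw [pathLaw, PMF.bind_apply]
  have hmap : ∀ l' : List (Config d),
      (PMF.map (fun c' => c' :: l') (step l'.headI)) (c :: l)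
        = if l' = l then step l.headI c else 0 := by
    intro l'
    rw [PMF.map_apply]
    by_cases hl : l' = l
    · subst hl
      rw [if_pos rfl]
      refine (tsum_eq_single c fun b hb => ?_).trans ?_
      · exact if_neg fun h => hb (by injection h with h1 _; exact h1.symm)
      · exact if_pos rfl
    · rw [if_neg hl]
      refine ENNReal.tsum_eq_zero.2 fun b =>
        if_neg fun h => hl (by injection h with _ h2; exact h2.symm)
  calc ∑' l', pathLaw step init t l' * (PMF.map (fun c' => c' :: l') (step l'.headI)) (c :: l)
      = ∑' l', pathLaw step init t l' * (if l' = l then step l.headI c else 0) :=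
        tsum_congr fun l' => by rw [hmap]
    _ = pathLaw step init t l * (if l = l then step l.headI c else 0) :=
        tsum_eq_single l fun b hb => by rw [if_neg hb, mul_zero]
    _ = pathLaw step init t l * step l.headI c := by rw [if_pos rfl]

lemma pathLaw_length {d : ℕ} (step : Config d → PMF (Config d)) (init : Config d) :
    ∀ t : ℕ, ∀ l ∈ (pathLaw step init t).support, l.length = t + 1 := by
  intro t
  induction t with
  | zero =>
      intro l hl
      rw [pathLaw, PMF.support_pure, Set.mem_singleton_iff] at hl
      subst hl; rfl
  | succ t ih =>
      intro l hl
      rw [pathLaw, PMF.support_bind] at hl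
      obtain ⟨l', hl', hl⟩ := Set.mem_iUnion₂.1 hl
      rw [PMF.support_map] at hl
      obtain ⟨c, -, rfl⟩ := hl
      rw [List.length_cons, ih l' hl']

lemma pathLaw_apply_length_ne {d : ℕ} {step : Config d → PMF (Config d)} {init : Config d}
    {t : ℕ} {l : List (Config d)} (h : l.length ≠ t + 1) : pathLaw step init t l = 0 := by
  by_contra h0
  exact h (pathLaw_length step init t l ((PMF.mem_support_iff _ _).2 h0))

lemma measure_ext_sing {β : Type*} [MeasurableSpace β] [Countable β]
    (μ ν : Measure β) (hall : ∀ s : Set β, MeasurableSet s)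
    (h : ∀ b : β, μ {b} = ν {b}) : μ = ν := by
  ext s _
  have hs : s = ⋃ b ∈ s, {b} := by simp
  rw [hs, measure_biUnion s.to_countable
      (fun b _ b' _ hbb' => by simp [Set.disjoint_singleton, hbb']) (fun b _ => hall {b}),
    measure_biUnion s.to_countable
      (fun b _ b' _ hbb' => by simp [Set.disjoint_singleton, hbb']) (fun b _ => hall {b})]
  exact tsum_congr fun b => h b

lemma ivl_diff : ∀ (t : ℕ) (l : List (Config 4)), l.length = t + 1 →
    (ivl P l).2 - (ivl P l).1 = ((pathLaw (cstep P) cinit t) l).toReal := by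
  intro t
  induction t with
  | zero =>
      intro l hl
      obtain ⟨c, l', rfl⟩ : ∃ c l', l = c :: l' := by
        cases l with
        | nil => simp at hl
        | cons c l' => exact ⟨c, l', rfl⟩
      have hl' : l' = [] := by simpa using hl
      subst hl'
      rw [pathLaw, PMF.pure_apply]
      by_cases hc : c = cinit
      · subst hc
        rw [ivl, if_pos rfl, if_pos rfl]
        norm_num
      · rw [ivl, if_neg hc, if_neg (by simpa using hc)]
        norm_num
  | succ t ih =>
      intro l hl
      obtain ⟨c, l', rfl⟩ : ∃ c l', l = c :: l' := by
        cases l with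
        | nil => simp at hl
        | cons c l' => exact ⟨c, l', rfl⟩
      have hl' : l'.length = t + 1 := by simpa using hl
      obtain ⟨h', r', rfl⟩ : ∃ h' r', l' = h' :: r' := by
        cases l' with
        | nil => simp at hl'
        | cons h' r' => exact ⟨h', r', rfl⟩
      rw [pathLaw_cons_apply, ENNReal.toReal_mul, ← ih _ hl',
        ← qm_encode (cstep P (h' :: r').headI) c]
      show ptr (cstep P (h' :: r').headI) (ivl P (h' :: r')).1 (ivl P (h' :: r')).2
            (Encodable.encode c + 1)
          - ptr (cstep P (h' :: r').headI) (ivl P (h' :: r')).1 (ivl P (h' :: r')).2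
            (Encodable.encode c)
        = ((ivl P (h' :: r')).2 - (ivl P (h' :: r')).1)
          * (qm (cstep P (h' :: r').headI) (Encodable.encode c)).toReal
      rw [ptr, ptr, cums_succ]
      ring

/-- The trajectory process, junk outside `[0,1)`. -/
noncomputable def Zg (t : ℕ) (x : ℝ) : Config 4 :=
  if 0 ≤ x ∧ x < 1 then (traj P t x).1 else cinit

/-- Trajectory prefix of the coupled process, newest first. -/
noncomputable def prefZ (t : ℕ) (x : ℝ) : List (Config 4) :=
  (List.range (t + 1)).map fun s => Zg P (t - s) x

lemma prefZ_pos {x : ℝ} (hx : 0 ≤ x ∧ x < 1) (t : ℕ) : prefZ P t x = prefR P t x := by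
  rw [prefZ, prefR]
  exact List.map_congr_left fun s _ => by rw [Zg, if_pos hx]

lemma prefZ_neg {x : ℝ} (hx : ¬(0 ≤ x ∧ x < 1)) (t : ℕ) :
    prefZ P t x = (List.range (t + 1)).map fun _ => cinit := by
  rw [prefZ]
  exact List.map_congr_left fun s _ => by rw [Zg, if_neg hx]

lemma prefZ_length (t : ℕ) (x : ℝ) : (prefZ P t x).length = t + 1 := by
  rw [prefZ, List.length_map, List.length_range]

lemma event_inter {t : ℕ} {l : List (Config 4)} (hl : l.length = t + 1) :
    prefZ P t ⁻¹' {l} ∩ Set.Ico 0 1 = Set.Ico (ivl P l).1 (ivl P l).2 := by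
  obtain ⟨hb0, hb, hb1⟩ := ivl_bounds P l
  ext x
  simp only [Set.mem_inter_iff, Set.mem_preimage, Set.mem_singleton_iff, Set.mem_Ico]
  constructor
  · rintro ⟨hpre, hx0, hx1⟩
    rw [prefZ_pos P ⟨hx0, hx1⟩] at hpre
    exact ((main_iff P t hx0 hx1 l hl).1).1 hpre
  · intro hx
    have hx01 : 0 ≤ x ∧ x < 1 := ⟨le_trans hb0 hx.1, lt_of_lt_of_le hx.2 hb1⟩
    refine ⟨?_, hx01.1, hx01.2⟩
    rw [prefZ_pos P hx01]
    exact ((main_iff P t hx01.1 hx01.2 l hl).1).2 hx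

lemma event_inter_ne {t : ℕ} {l : List (Config 4)} (hl : l.length ≠ t + 1) :
    prefZ P t ⁻¹' {l} ∩ Set.Ico 0 1 = ∅ := by
  ext x
  simp only [Set.mem_inter_iff, Set.mem_preimage, Set.mem_singleton_iff, Set.mem_empty_iff_false,
    iff_false, not_and]
  intro hpre
  exfalso
  exact hl (by rw [← hpre, prefZ_length])

lemma measurable_prefZ (t : ℕ) : Measurable (prefZ P t) := by
  apply measurable_to_countable'
  intro l
  have hdecomp : prefZ P t ⁻¹' {l}
      = (prefZ P t ⁻¹' {l} ∩ Set.Ico 0 1) ∪ (prefZ P t ⁻¹' {l} ∩ (Set.Ico 0 1)ᶜ) :=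
    (Set.inter_union_compl _ _).symm
  rw [hdecomp]
  refine MeasurableSet.union ?_ ?_
  · by_cases hl : l.length = t + 1
    · rw [event_inter P hl]; exact measurableSet_Ico
    · rw [event_inter_ne P hl]; exact MeasurableSet.empty
  · have hconst : prefZ P t ⁻¹' {l} ∩ (Set.Ico (0:ℝ) 1)ᶜ
        = if ((List.range (t + 1)).map fun _ => cinit) = l then (Set.Ico (0:ℝ) 1)ᶜ else ∅ := by
      ext x
      simp only [Set.mem_inter_iff, Set.mem_preimage, Set.mem_singleton_iff, Set.mem_compl_iff,
        Set.mem_Ico]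
      constructor
      · rintro ⟨hpre, hx⟩
        rw [prefZ_neg P (by exact hx) t] at hpre
        rw [if_pos hpre]
        exact hx
      · intro hx
        by_cases hc : ((List.range (t + 1)).map fun _ => cinit) = l
        · rw [if_pos hc] at hx
          exact ⟨by rw [prefZ_neg P (by exact hx) t]; exact hc, hx⟩
        · rw [if_neg hc] at hx
          exact absurd hx (Set.notMem_empty x)
    rw [hconst]
    split_ifs
    · exact measurableSet_Ico.compl
    · exact MeasurableSet.empty

instance : IsProbabilityMeasure (volume.restrict (Set.Ico (0:ℝ) 1)) := by
  constructor
  rw [Measure.restrict_apply MeasurableSet.univ, Set.univ_inter, Real.volume_Ico]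
  norm_num

lemma map_prefZ (t : ℕ) :
    Measure.map (prefZ P t) (volume.restrict (Set.Ico (0:ℝ) 1))
      = (pathLaw (cstep P) cinit t).toMeasure := by
  refine measure_ext_sing _ _ (fun s => MeasurableSpace.measurableSet_top) fun l => ?_
  rw [Measure.map_apply (measurable_prefZ P t) MeasurableSpace.measurableSet_top,
    Measure.restrict_apply (measurable_prefZ P t MeasurableSpace.measurableSet_top),
    PMF.toMeasure_apply_singleton _ l MeasurableSpace.measurableSet_top]
  by_cases hl : l.length = t + 1
  · rw [event_inter P hl, Real.volume_Ico, ivl_diff P t l hl,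
      ENNReal.ofReal_toReal (PMF.apply_ne_top _ _)]
  · rw [event_inter_ne P hl, pathLaw_apply_length_ne hl, measure_empty]

lemma measurable_from_top {β γ : Type*} [MeasurableSpace γ] (f : β → γ) :
    @Measurable β γ ⊤ _ f := fun _ _ => MeasurableSpace.measurableSet_top

lemma hasPathLaw_proj (pr : Site 4 → Site 2) (init2 : Config 2)
    (hmarg : ∀ t : ℕ, (pathLaw (cstep P) cinit t).map (List.map (Finsupp.mapDomain pr))
      = pathLaw (aperiodicStep P) init2 t) :
    HasPathLaw (volume.restrict (Set.Ico (0:ℝ) 1)) (aperiodicStep P) init2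
      (fun t x => Finsupp.mapDomain pr (Zg P t x)) := by
  intro t
  have hfun : (fun ω : ℝ =>
        (List.range (t + 1)).map fun s => Finsupp.mapDomain pr (Zg P (t - s) ω))
      = (List.map (Finsupp.mapDomain pr)) ∘ (prefZ P t) := by
    funext x
    show _ = List.map _ ((List.range (t + 1)).map _)
    rw [List.map_map]
    rfl
  rw [hfun, ← Measure.map_map (measurable_from_top _) (measurable_prefZ P t), map_prefZ,
    PMF.toMeasure_map (List.map (Finsupp.mapDomain pr)) (pathLaw (cstep P) cinit t)
      (measurable_from_top (List.map (Finsupp.mapDomain pr))), hmarg]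

end Sec4b
section Sec5

variable (P : PMF ℕ)

lemma mapDomain_apply_ne_zero {pr : Site 4 → Site 2} {c : Config 4} {p : Site 4}
    (hp : p ∈ c.support) : Finsupp.mapDomain pr c (pr p) ≠ 0 := by
  rw [Finsupp.mapDomain, Finsupp.sum_apply, Finsupp.sum]
  have hle : Finsupp.single (pr p) (c p) (pr p)
      ≤ ∑ a ∈ c.support, Finsupp.single (pr a) (c a) (pr p) :=
    Finset.single_le_sum (f := fun a => Finsupp.single (pr a) (c a) (pr p))
      (fun _ _ => Nat.zero_le _) hp
  rw [Finsupp.single_eq_same] at hle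
  intro h0
  rw [h0] at hle
  exact Finsupp.mem_support_iff.1 hp (Nat.le_zero.1 hle)

lemma exists_pre_of_mapDomain_ne_zero {pr : Site 4 → Site 2} {c : Config 4} {z : Site 2}
    (hz : Finsupp.mapDomain pr c z ≠ 0) : ∃ p ∈ c.support, pr p = z := by
  rw [Finsupp.mapDomain, Finsupp.sum_apply, Finsupp.sum] at hz
  obtain ⟨a, ha, hne⟩ := Finset.exists_ne_zero_of_sum_ne_zero hz
  refine ⟨a, ha, ?_⟩
  by_contra hne2
  rw [Finsupp.single_apply, if_neg hne2] at hne
  exact hne rfl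

lemma cinit_support : (cinit : Config 4).support = {pairSite ![0, 0] ![1, 0]} :=
  Finsupp.support_single_ne_zero _ one_ne_zero

/-- If the second marginal avoids the boundary along a good prefix, then all of its particles
stay in the open box. -/
lemma inbox {n : ℕ} (hn : 1 ≤ n) : ∀ l : List (Config 4), GoodL l →
    (∀ c ∈ l, avoids n (Finsupp.mapDomain pr1 c)) →
    ∀ c ∈ l, ∀ p ∈ c.support, ∀ j : Fin 2, (pr1 p j).natAbs < n := by
  intro l
  induction l with
  | nil => intro _ _ c hc; simp at hc
  | cons c0 l' ih =>
      rintro ⟨-, hlast, hR, hchain⟩ hav c hc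
      cases l' with
      | nil =>
          have hc0 : c0 = cinit := by simpa using hlast
          subst hc0
          rcases List.mem_singleton.1 hc with rfl
          intro p hp j
          have hp' : p = pairSite ![0, 0] ![1, 0] := by
            have := hp
            rw [cinit_support, Finset.mem_singleton] at this
            exact this
          subst hp'
          by_cases h1 : n = 1
          · exfalso
            subst h1
            have hav0 := hav _ (List.mem_singleton_self _)
            have hbd : onBdry 1 (![1, 0] : Site 2) := by
              refine ⟨fun i => ?_, ⟨0, by norm_num⟩⟩
              fin_cases i <;> norm_num
            have h0 := hav0 ![1, 0] hbd
            refine mapDomain_apply_ne_zero (pr := pr1)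
              (by rw [cinit_support]; exact Finset.mem_singleton_self _) ?_
            rw [pr1_pairSite]
            exact h0
          · rw [pr1_pairSite]
            fin_cases j
            · show (1 : ℤ).natAbs < n
              omega
            · show (0 : ℤ).natAbs < n
              omega
      | cons h r =>
          have hGood' : GoodL (h :: r) :=
            ⟨by simp, by rwa [List.getLast?_cons_cons] at hlast,
              fun c' hc' => hR c' (List.mem_cons_of_mem _ hc'),
              (List.isChain_cons_cons.1 hchain).2⟩
          have hav' : ∀ c' ∈ h :: r, avoids n (Finsupp.mapDomain pr1 c') :=
            fun c' hc' => hav c' (List.mem_cons_of_mem _ hc')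
          have ihh := ih hGood' hav'
          rcases List.mem_cons.1 hc with rfl | hc'
          · intro p hp j
            have hAdj : AdjC c h := (List.isChain_cons_cons.1 hchain).1
            obtain ⟨p', hp', hclose⟩ := hAdj p hp
            have hb' : ∀ j', (pr1 p' j').natAbs < n :=
              ihh h (List.mem_cons_self) p' hp'
            have hle : ∀ j', (pr1 p j').natAbs ≤ n := by
              intro j'
              have h1 := hclose j'
              have h2 := hb' j'
              omega
            by_contra hge
            have hbd : onBdry n (pr1 p) := by
              constructor
              · intro i
                have := hle i
                rw [Int.abs_eq_natAbs]
                omega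
              · refine ⟨j, ?_⟩
                have := hle j
                rw [Int.abs_eq_natAbs]
                omega
            have hav0 := hav c (List.mem_cons_self) (pr1 p) hbd
            exact mapDomain_apply_ne_zero hp hav0
          · exact ihh c hc'

lemma core_head {n : ℕ} (hn : 1 ≤ n) {l : List (Config 4)} (hG : GoodL l)
    (hbad : ¬ avoids n (Finsupp.mapDomain pr0 l.headI)) :
    ∃ c ∈ l, ¬ avoids n (Finsupp.mapDomain pr1 c) := by
  by_contra hall
  push_neg at hall
  have hbox := inbox hn l hG hall
  unfold avoids at hbad
  push_neg at hbad
  obtain ⟨z, hzB, hz0⟩ := hbad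
  obtain ⟨p, hp, rfl⟩ := exists_pre_of_mapDomain_ne_zero hz0
  have hhead : l.headI ∈ l := headI_mem_of_ne_nil hG.1
  have hRp : Rp (pr0 p) (pr1 p) := hG.2.2.1 l.headI hhead p hp
  have hbox' := hbox l.headI hhead p hp
  obtain ⟨hb1, j, hbj⟩ := hzB
  rw [Int.abs_eq_natAbs] at hbj
  have hj : j = 0 ∨ j = 1 := by omega
  rcases hj with rfl | rfl
  · have h0 := hbox' 0
    have h1 := hRp.2
    omega
  · have h0 := hbox' 1
    have h1 := hRp.1
    rw [h1] at hbj
    omega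

lemma core_mem {n : ℕ} (hn : 1 ≤ n) : ∀ l : List (Config 4), GoodL l →
    ∀ c0 ∈ l, ¬ avoids n (Finsupp.mapDomain pr0 c0) →
    ∃ c ∈ l, ¬ avoids n (Finsupp.mapDomain pr1 c) := by
  intro l
  induction l with
  | nil => intro _ c0 hc0; simp at hc0
  | cons ch l' ih =>
      intro hG c0 hc0 hbad
      rcases List.mem_cons.1 hc0 with rfl | hc'
      · exact core_head hn hG hbad
      · have hne' : l' ≠ [] := List.ne_nil_of_mem hc'
        have hG' : GoodL l' := by
          obtain ⟨-, hlast, hR, hchain⟩ := hG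
          refine ⟨hne', ?_, fun c hc => hR c (List.mem_cons_of_mem _ hc), hchain.tail⟩
          cases l' with
          | nil => exact absurd rfl hne'
          | cons h r => rwa [List.getLast?_cons_cons] at hlast
        obtain ⟨c, hc, hbad1⟩ := ih hG' c0 hc' hbad
        exact ⟨c, List.mem_cons_of_mem _ hc, hbad1⟩

lemma hitTime_le_of {n : ℕ} (f g : ℕ → Config 2)
    (h : ∀ t, ¬ avoids n (f t) → ∃ s, s ≤ t ∧ ¬ avoids n (g s)) :
    hitTime n g ≤ hitTime n f := by
  rw [hitTime, hitTime]
  refine le_sInf ?_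
  rintro b ⟨t, ht, rfl⟩
  obtain ⟨s, hs, hbad⟩ := h t ht
  refine le_trans (sInf_le ⟨s, hbad, rfl⟩) ?_
  show (s : ℕ∞) ≤ (t : ℕ∞)
  exact_mod_cast hs

lemma prefZ_headI (t : ℕ) (x : ℝ) : (prefZ P t x).headI = Zg P t x := by
  rw [prefZ, List.range_succ_eq_map, List.map_cons]
  show Zg P (t - 0) x = Zg P t x
  rw [Nat.sub_zero]

end Sec5


/-- For every `n ≥ 1` there is a coupling of the aperiodic nearest-neighbors
branching random walks on `ℤ²` started at `(0,0)` and at `(1,0)` such that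
`τ_n^{(1,0)} ≤ τ_n^{(0,0)}` almost surely; in particular `τ_n^{(1,0)} ≤_st τ_n^{(0,0)}`, i.e.
`ℙ(τ_n^{(1,0)} > t) ≤ ℙ(τ_n^{(0,0)} > t)` for all `t`. -/
theorem aperiodic_coupled_hittingTimes (P : PMF ℕ) (n : ℕ) (hn : 1 ≤ n) :
    (∃ (Ω : Type) (_ : MeasurableSpace Ω) (Pr : Measure Ω) (_ : IsProbabilityMeasure Pr)
      (X0 X1 : ℕ → Ω → Config 2),
      HasPathLaw Pr (aperiodicStep P) (Finsupp.single ![0, 0] 1) X0 ∧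
      HasPathLaw Pr (aperiodicStep P) (Finsupp.single ![1, 0] 1) X1 ∧
      ∀ᵐ ω ∂Pr, hitTime n (fun t => X1 t ω) ≤ hitTime n (fun t => X0 t ω)) ∧
    (∀ t : ℕ, survProb (aperiodicStep P) (Finsupp.single ![1, 0] 1) n t
      ≤ survProb (aperiodicStep P) (Finsupp.single ![0, 0] 1) n t) := by
  constructor
  · refine ⟨ℝ, inferInstance, volume.restrict (Set.Ico (0:ℝ) 1), inferInstance,
      fun t x => Finsupp.mapDomain pr0 (Zg P t x),
      fun t x => Finsupp.mapDomain pr1 (Zg P t x),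
      hasPathLaw_proj P pr0 _ (map_pathLaw0 P),
      hasPathLaw_proj P pr1 _ (map_pathLaw1 P), ?_⟩
    have hae : ∀ᵐ x ∂(volume.restrict (Set.Ico (0:ℝ) 1)), ∀ t : ℕ, GoodL (prefZ P t x) := by
      rw [MeasureTheory.ae_all_iff]
      intro t
      rw [MeasureTheory.ae_iff]
      have h0 : (volume.restrict (Set.Ico (0:ℝ) 1))
          (prefZ P t ⁻¹' (((pathLaw (cstep P) cinit t).support)ᶜ)) = 0 := by
        rw [← Measure.map_apply (measurable_prefZ P t) MeasurableSpace.measurableSet_top,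
          map_prefZ, PMF.toMeasure_apply_eq_zero_iff (hs := MeasurableSpace.measurableSet_top)]
        exact disjoint_compl_right
      refine measure_mono_null ?_ h0
      intro x hx
      simp only [Set.mem_preimage, Set.mem_compl_iff]
      intro hsupp
      exact hx (pathLaw_good P t _ hsupp)
    refine hae.mono fun x hx => ?_
    refine hitTime_le_of _ _ fun t hbad => ?_
    have hG := hx t
    obtain ⟨c, hc, hbad1⟩ := core_head hn hG (by rw [prefZ_headI]; exact hbad)
    rw [prefZ] at hc
    obtain ⟨s, _, hce⟩ := List.mem_map.1 hc
    refine ⟨t - s, Nat.sub_le t s, ?_⟩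
    rw [← hce] at hbad1
    exact hbad1
  · intro t
    rw [survProb, survProb, ← map_pathLaw0 P t, ← map_pathLaw1 P t,
      PMF.toMeasure_map_apply _ _ _ (measurable_from_top _) MeasurableSpace.measurableSet_top,
      PMF.toMeasure_map_apply _ _ _ (measurable_from_top _) MeasurableSpace.measurableSet_top,
      ← PMF.toMeasure_apply_inter_support (hs := MeasurableSpace.measurableSet_top)]
    refine measure_mono fun l hl => ?_
    obtain ⟨hl1, hlsupp⟩ := hl
    have hG : GoodL l := pathLaw_good P t l hlsupp
    simp only [Set.mem_preimage, Set.mem_setOf_eq] at hl1 ⊢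
    intro c2 hc2
    obtain ⟨c, hcl, rfl⟩ := List.mem_map.1 hc2
    by_contra hbad
    obtain ⟨c', hc', hbad1⟩ := core_mem hn l hG c hcl hbad
    exact hbad1 (hl1 _ (List.mem_map_of_mem hc'))

end BRW
end
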